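/- arXiv:1205.5537 — 12 statements merged into one kernel-verified Lean document; each statement's English description precedes it below -/
import Mathlib

section
/- Let W be a dominating set of the Cartesian product of directed cycles C_m □ C_n (m, n ≥ 2). For each i in {0,...,n-1}, let a_i be the number of vertices of W lying in the i-th copy of C_m (i.e., vertices whose second coordinate is i). Then for all i (indices modulo n), a_{i-1} + 2·a_i ≥ m. -/
/-- Arc relation of the directed cycle on `ZMod m`: an arc from `x` to `x+1`. -/
def cycArc (m : ℕ) : ZMod m → ZMod m → Prop := fun x y => y = x + 1

/-- Arc relation of the Cartesian product of two digraphs given by arc relations. -/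
def prodArc {α β : Type*} (A : α → α → Prop) (B : β → β → Prop) :
    α × β → α × β → Prop :=
  fun u v => (A u.1 v.1 ∧ u.2 = v.2) ∨ (B u.2 v.2 ∧ u.1 = v.1)

/-- `W` is a dominating set: every vertex equals or is an out-neighbor of some vertex of `W`. -/
def IsDomSet {α : Type*} (A : α → α → Prop) (W : Set α) : Prop :=
  ∀ v, ∃ u ∈ W, u = v ∨ A u v

/-- The domination number of a digraph with arc relation `A`. -/
noncomputable def domNum (α : Type*) (A : α → α → Prop) : ℕ :=
  sInf {k | ∃ W : Set α, IsDomSet A W ∧ W.ncard = k}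

theorem stmt_0 (m n : ℕ) (hm : 2 ≤ m) (hn : 2 ≤ n)
    (W : Set (ZMod m × ZMod n))
    (hW : IsDomSet (prodArc (cycArc m) (cycArc n)) W)
    (a : ZMod n → ℕ)
    (ha : ∀ i : ZMod n, a i = {v | v ∈ W ∧ v.2 = i}.ncard) :
    ∀ i : ZMod n, m ≤ a (i - 1) + 2 * a i := by
  intro i
  classical
  haveI hm0 : NeZero m := ⟨by omega⟩
  haveI hn0 : NeZero n := ⟨by omega⟩
  haveI : Fact (1 < n) := ⟨by omega⟩
  have hii : i - 1 ≠ i := by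
    intro h
    have : (1 : ZMod n) = 0 := by
      have := sub_eq_iff_eq_add.mp h
      have h2 : i = i + 1 := by linear_combination this
      have := (left_eq_add).mp h2
      exact this
    exact one_ne_zero this
  choose u hu hdom using hW
  set Si : Finset (ZMod m × ZMod n) :=
    Finset.univ.filter (fun v => v ∈ W ∧ v.2 = i) with hSi
  set Sj : Finset (ZMod m × ZMod n) :=
    Finset.univ.filter (fun v => v ∈ W ∧ v.2 = i - 1) with hSj
  have hai : a i = Si.card := by
    rw [ha i, ← Set.ncard_coe_finset]
    congr 1
    ext v; simp [hSi]
  have haj : a (i - 1) = Sj.card := by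
    rw [ha (i - 1), ← Set.ncard_coe_finset]
    congr 1
    ext v; simp [hSj]
  let f : ZMod m → (ZMod m × ZMod n) × Bool :=
    fun x => (u (x, i), decide (u (x, i) = (x, i)))
  -- classify dominators
  have hcases : ∀ x : ZMod m,
      ((u (x, i)).2 = i ∧ (u (x, i) = (x, i) ∨ x = (u (x, i)).1 + 1)) ∨
      ((u (x, i)).2 = i - 1 ∧ (u (x, i)).1 = x) := by
    intro x
    rcases hdom (x, i) with h | h
    · exact Or.inl ⟨by rw [h], Or.inl h⟩
    · rcases h with ⟨h1, h2⟩ | ⟨h1, h2⟩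
      · exact Or.inl ⟨h2, Or.inr h1⟩
      · exact Or.inr ⟨eq_sub_of_add_eq h1.symm, h2⟩
  have hmem : ∀ x : ZMod m, f x ∈ (Si ×ˢ (Finset.univ : Finset Bool)) ∪ (Sj ×ˢ {false}) := by
    intro x
    rcases hcases x with ⟨h2, _⟩ | ⟨h2, h1⟩
    · apply Finset.mem_union_left
      simp only [Finset.mem_product, Finset.mem_filter, Finset.mem_univ, true_and, and_true, hSi]
      exact ⟨hu _, h2⟩
    · apply Finset.mem_union_right
      have hne : u (x, i) ≠ (x, i) := by
        intro h; rw [h] at h2; exact hii h2.symm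
      simp [hSj, f, hu, h2, hne]
  have hinj : Function.Injective f := by
    intro x y hxy
    have he : u (x, i) = u (y, i) := congrArg Prod.fst hxy
    have ht : decide (u (x, i) = (x, i)) = decide (u (y, i) = (y, i)) :=
      congrArg Prod.snd hxy
    rcases hcases x with ⟨hx2, hx⟩ | ⟨hx2, hx1⟩
    · rcases hcases y with ⟨hy2, hy⟩ | ⟨hy2, hy1⟩
      · -- both in column i
        rcases hx with hxe | hxa
        · have : u (y, i) = (y, i) := by
            have : decide (u (y, i) = (y, i)) = true := by
              rw [← ht, decide_eq_true_iff]; exact hxe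
            exact decide_eq_true_iff.mp this
          have := hxe.symm.trans (he.trans this)
          exact (Prod.mk.injEq .. ▸ this).1
        · have hxne : u (x, i) ≠ (x, i) := by
            intro h
            have : x = x + 1 := by rw [h] at hxa; simpa using hxa
            have h10 : (1 : ZMod m) = 0 := (left_eq_add).mp this
            haveI : Fact (1 < m) := ⟨by omega⟩
            exact one_ne_zero h10
          have hyne : u (y, i) ≠ (y, i) := by
            intro h
            have : decide (u (x, i) = (x, i)) = true := by
              rw [ht, decide_eq_true_iff]; exact h
            exact hxne (decide_eq_true_iff.mp this)
          rcases hy with hye | hya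
          · exact absurd hye hyne
          · rw [hxa, hya, he]
      · -- x in col i, y in col i-1 : contradiction
        have h3 : (u (y, i)).2 = i := he ▸ hx2
        exact absurd (hy2.symm.trans h3) hii
    · rcases hcases y with ⟨hy2, _⟩ | ⟨hy2, hy1⟩
      · have h3 : (u (y, i)).2 = i - 1 := he ▸ hx2
        exact absurd (h3.symm.trans hy2) hii
      · rw [← hx1, ← hy1, he]
  have h1 : m ≤ ((Si ×ˢ (Finset.univ : Finset Bool)) ∪ (Sj ×ˢ {false})).card := by
    calc m = Fintype.card (ZMod m) := (ZMod.card m).symm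
      _ = (Finset.univ : Finset (ZMod m)).card := (Finset.card_univ).symm
      _ ≤ _ := Finset.card_le_card_of_injOn f (fun x _ => hmem x) hinj.injOn
  have h2 : ((Si ×ˢ (Finset.univ : Finset Bool)) ∪ (Sj ×ˢ {false})).card
      ≤ Si.card * 2 + Sj.card := by
    refine le_trans (Finset.card_union_le _ _) ?_
    simp [Finset.card_product]
  omega
end

section
/- For m, n ≥ 2 with m ≡ 0 (mod 3), writing k_1 = m/3, the domination number of C_m □ C_n satisfies γ(C_m □ C_n) ≥ n·k_1. -/
theorem stmt_1 (m n k₁ : ℕ) (hm : 2 ≤ m) (hn : 2 ≤ n)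
    (hmod : m % 3 = 0) (hk₁ : k₁ = m / 3) :
    n * k₁ ≤ domNum (ZMod m × ZMod n) (prodArc (cycArc m) (cycArc n)) := by
  subst hk₁
  haveI : NeZero m := ⟨by omega⟩
  haveI : NeZero n := ⟨by omega⟩
  apply le_csInf
  · exact ⟨(Set.univ : Set (ZMod m × ZMod n)).ncard, Set.univ,
      fun v => ⟨v, trivial, Or.inl rfl⟩, rfl⟩
  rintro k ⟨W, hW, rfl⟩
  have hWf : W.Finite := W.toFinite
  choose g hg hdom using hW
  set t : ZMod m × ZMod n → Finset (ZMod m × ZMod n) :=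
    fun u => {u, (u.1 + 1, u.2), (u.1, u.2 + 1)} with ht
  have hsub : (Finset.univ : Finset (ZMod m × ZMod n)) ⊆
      hWf.toFinset.biUnion t := by
    intro v _
    simp only [Finset.mem_biUnion, Set.Finite.mem_toFinset]
    refine ⟨g v, hg v, ?_⟩
    rcases hdom v with h | h
    · simp [ht, h]
    · rcases h with ⟨h1, h2⟩ | ⟨h1, h2⟩
      · simp only [ht, Finset.mem_insert, Finset.mem_singleton, Prod.ext_iff]
        exact Or.inr (Or.inl ⟨h1, h2.symm⟩)
      · simp only [ht, Finset.mem_insert, Finset.mem_singleton, Prod.ext_iff]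
        exact Or.inr (Or.inr ⟨h2.symm, h1⟩)
  have hcard := Finset.card_le_card hsub
  have hb : (hWf.toFinset.biUnion t).card ≤ 3 * hWf.toFinset.card := by
    calc (hWf.toFinset.biUnion t).card ≤ ∑ u ∈ hWf.toFinset, (t u).card :=
          Finset.card_biUnion_le
      _ ≤ ∑ u ∈ hWf.toFinset, 3 := by
          apply Finset.sum_le_sum
          intro u _
          exact (Finset.card_insert_le _ _).trans
            (Nat.succ_le_succ (Finset.card_insert_le _ _))
      _ = 3 * hWf.toFinset.card := by rw [Finset.sum_const, smul_eq_mul, Nat.mul_comm]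
  have huniv : (Finset.univ : Finset (ZMod m × ZMod n)).card = m * n := by
    simp [Finset.card_univ, ZMod.card]
  have hnc : W.ncard = hWf.toFinset.card := Set.ncard_eq_toFinset_card W hWf
  rw [hnc]
  have h3 : 3 * (n * (m / 3)) ≤ 3 * hWf.toFinset.card := by
    calc 3 * (n * (m / 3)) = (3 * (m / 3)) * n := by ring
      _ = m * n := by rw [Nat.mul_div_cancel' (Nat.dvd_of_mod_eq_zero hmod)]
      _ ≤ _ := huniv ▸ hcard.trans hb
  exact Nat.le_of_mul_le_mul_left h3 (by norm_num)
end

section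
/- For m, n ≥ 2 with m ≡ 1 (mod 3), writing k_1 = ⌊m/3⌋, the domination number of C_m □ C_n satisfies γ(C_m □ C_n) ≥ n·k_1 + n/2. -/
lemma seq_lemma (n : ℕ) [NeZero n] (a : ZMod n → ℤ)
    (h : ∀ j : ZMod n, 1 ≤ a (j - 1) + 2 * a j) :
    (n : ℤ) ≤ 2 * ∑ j, a j := by
  classical
  set P : Finset (ZMod n) := Finset.univ.filter (fun j => 1 ≤ a j) with hP
  set Zs : Finset (ZMod n) := Finset.univ.filter (fun j => ¬ 1 ≤ a j) with hZ
  set Zm : Finset (ZMod n) := Finset.univ.filter (fun j => a j ≤ -1) with hZm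
  -- successor of a nonpositive entry is ≥ 1
  have succ_pos : ∀ j : ZMod n, a j ≤ 0 → 1 ≤ a (j + 1) := by
    intro j hj
    have := h (j + 1)
    rw [add_sub_cancel_right] at this
    omega
  -- predecessor of a ≤ -1 entry is big
  have pred_big : ∀ j : ZMod n, a j ≤ -1 → 1 - 2 * a j ≤ a (j - 1) := by
    intro j hj
    have := h j
    omega
  -- card Zs ≤ card P
  have hcard : Zs.card ≤ P.card := by
    apply Finset.card_le_card_of_injOn (fun j => j + 1)
    · intro j hj
      simp only [hZ, Finset.mem_coe, Finset.mem_filter, Finset.mem_univ, true_and] at hj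
      simp only [hP, Finset.mem_coe, Finset.mem_filter, Finset.mem_univ, true_and]
      exact succ_pos j (by omega)
    · intro x _ y _ hxy
      exact add_right_cancel hxy
  have hn : P.card + Zs.card = n := by
    rw [Finset.card_filter_add_card_filter_not, Finset.card_univ, ZMod.card]
  -- split the sum
  have hsplit : ∑ j, a j = ∑ j ∈ P, a j + ∑ j ∈ Zs, a j :=
    (Finset.sum_filter_add_sum_filter_not _ _ _).symm
  -- ∑ Zs ≥ ∑ Zm
  have hZmZ : ∑ j ∈ Zm, a j ≤ ∑ j ∈ Zs, a j := by
    apply Finset.sum_le_sum_of_subset_of_nonneg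
    · intro j hj
      simp only [hZm, Finset.mem_filter, Finset.mem_univ, true_and] at hj
      simp only [hZ, Finset.mem_filter, Finset.mem_univ, true_and]
      omega
    · intro j hj1 hj2
      simp only [hZ, Finset.mem_filter, Finset.mem_univ, true_and] at hj1
      simp only [hZm, Finset.mem_filter, Finset.mem_univ, true_and] at hj2
      omega
  -- the image of Zm under (· - 1) sits in P
  have himg : Zm.image (fun j => j - 1) ⊆ P := by
    intro p hp
    simp only [Finset.mem_image] at hp
    obtain ⟨j, hj, rfl⟩ := hp
    simp only [hZm, Finset.mem_filter, Finset.mem_univ, true_and] at hj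
    simp only [hP, Finset.mem_filter, Finset.mem_univ, true_and]
    have := pred_big j hj
    omega
  have hinj : Set.InjOn (fun j : ZMod n => j - 1) Zm := by
    intro x _ y _ hxy
    simpa [sub_eq_add_neg] using hxy
  have hkey : ∑ j ∈ Zm, (a (j - 1) - 1) ≤ ∑ p ∈ P, (a p - 1) := by
    have himage : ∑ p ∈ Finset.image (fun j : ZMod n => j - 1) Zm, (a p - 1)
        = ∑ j ∈ Zm, (a (j - 1) - 1) :=
      Finset.sum_image (fun x hx y hy hxy => hinj hx hy hxy)
    rw [← himage]
    apply Finset.sum_le_sum_of_subset_of_nonneg himg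
    intro p hp _
    simp only [hP, Finset.mem_filter, Finset.mem_univ, true_and] at hp
    omega
  have hlow : ∑ j ∈ Zm, (-2 * a j) ≤ ∑ j ∈ Zm, (a (j - 1) - 1) := by
    apply Finset.sum_le_sum
    intro j hj
    simp only [hZm, Finset.mem_filter, Finset.mem_univ, true_and] at hj
    have := pred_big j hj
    omega
  have hZmneg : ∑ j ∈ Zm, a j ≤ 0 := by
    apply Finset.sum_nonpos
    intro j hj
    simp only [hZm, Finset.mem_filter, Finset.mem_univ, true_and] at hj
    omega
  have hPsum : (P.card : ℤ) + ∑ p ∈ P, (a p - 1) = ∑ p ∈ P, a p := by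
    rw [Finset.sum_sub_distrib, Finset.sum_const, nsmul_eq_mul, mul_one]
    ring
  have hZm2 : ∑ j ∈ Zm, (-2 * a j) = -2 * ∑ j ∈ Zm, a j := by
    rw [Finset.mul_sum]
  -- combine
  have hS : (P.card : ℤ) ≤ ∑ j, a j := by
    rw [hsplit]
    have h1 : ∑ p ∈ P, a p ≥ (P.card : ℤ) + (-2 * ∑ j ∈ Zm, a j) := by
      rw [← hPsum, ← hZm2]
      linarith [le_trans hlow hkey]
    linarith
  have h2P : (n : ℤ) ≤ 2 * (P.card : ℤ) := by
    have : (n : ℤ) = (P.card : ℤ) + (Zs.card : ℤ) := by exact_mod_cast hn.symm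
    have : (Zs.card : ℤ) ≤ (P.card : ℤ) := by exact_mod_cast hcard
    omega
  linarith

theorem stmt_2 (m n k₁ : ℕ) (hm : 2 ≤ m) (hn : 2 ≤ n)
    (hmod : m % 3 = 1) (hk₁ : k₁ = m / 3) :
    (n * k₁ : ℚ) + n / 2 ≤
      (domNum (ZMod m × ZMod n) (prodArc (cycArc m) (cycArc n)) : ℚ) := by
  classical
  haveI : NeZero m := ⟨by omega⟩
  haveI : NeZero n := ⟨by omega⟩
  -- the inf is attained
  have hne : {k | ∃ W : Set (ZMod m × ZMod n),
      IsDomSet (prodArc (cycArc m) (cycArc n)) W ∧ W.ncard = k}.Nonempty :=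
    ⟨(Set.univ : Set (ZMod m × ZMod n)).ncard,
      Set.univ, fun v => ⟨v, trivial, Or.inl rfl⟩, rfl⟩
  obtain ⟨W, hW, hWcard⟩ := Nat.sInf_mem hne
  set F : Finset (ZMod m × ZMod n) := W.toFinite.toFinset with hF
  have hFcard : W.ncard = F.card := Set.ncard_eq_toFinset_card _ _
  set w : ZMod n → ℕ := fun j => (F.filter (fun v => v.2 = j)).card with hw
  -- column constraint
  have hcol : ∀ j : ZMod n, m ≤ w (j - 1) + 2 * w j := by
    intro j
    set Fj := F.filter (fun v => v.2 = j) with hFj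
    set Fj' := F.filter (fun v => v.2 = j - 1) with hFj'
    have cover : (Finset.univ : Finset (ZMod m)) ⊆
        (Fj.image Prod.fst ∪ Fj.image (fun v => v.1 + 1)) ∪ Fj'.image Prod.fst := by
      intro x _
      obtain ⟨u, huW, hdom⟩ := hW (x, j)
      have huF : u ∈ F := (Set.Finite.mem_toFinset _).2 huW
      rcases hdom with he | harc
      · apply Finset.mem_union_left
        apply Finset.mem_union_left
        exact Finset.mem_image.2 ⟨u, Finset.mem_filter.2 ⟨huF, by rw [he]⟩, by rw [he]⟩
      · rcases harc with ⟨hc, h2⟩ | ⟨hc, h1⟩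
        · apply Finset.mem_union_left
          apply Finset.mem_union_right
          exact Finset.mem_image.2 ⟨u, Finset.mem_filter.2 ⟨huF, h2⟩, hc.symm⟩
        · apply Finset.mem_union_right
          have : u.2 = j - 1 := by
            have : j = u.2 + 1 := hc
            rw [this]; ring
          exact Finset.mem_image.2 ⟨u, Finset.mem_filter.2 ⟨huF, this⟩, h1⟩
    have hm' : (Finset.univ : Finset (ZMod m)).card = m := by
      rw [Finset.card_univ, ZMod.card]
    calc m = (Finset.univ : Finset (ZMod m)).card := hm'.symm
      _ ≤ ((Fj.image Prod.fst ∪ Fj.image (fun v => v.1 + 1)) ∪ Fj'.image Prod.fst).card :=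
          Finset.card_le_card cover
      _ ≤ (Fj.image Prod.fst ∪ Fj.image (fun v => v.1 + 1)).card
            + (Fj'.image Prod.fst).card := Finset.card_union_le _ _
      _ ≤ ((Fj.image Prod.fst).card + (Fj.image (fun v => v.1 + 1)).card)
            + (Fj'.image Prod.fst).card := by
          gcongr
          exact Finset.card_union_le _ _
      _ ≤ (Fj.card + Fj.card) + Fj'.card := by
          gcongr <;> exact Finset.card_image_le
      _ = w (j - 1) + 2 * w j := by rw [hw]; ring
  -- pass to integers
  have hm3 : m = 3 * k₁ + 1 := by omega
  set a : ZMod n → ℤ := fun j => (w j : ℤ) - k₁ with ha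
  have hconstr : ∀ j : ZMod n, 1 ≤ a (j - 1) + 2 * a j := by
    intro j
    have := hcol j
    simp only [ha]
    push_cast
    omega

  have hseq := seq_lemma n a hconstr
  -- total count
  have hsum : ∑ j, w j = F.card := by
    rw [hw]
    exact (Finset.card_eq_sum_card_fiberwise
      (f := Prod.snd) (t := Finset.univ) (fun x _ => Finset.mem_univ _)).symm
  have hasum : ∑ j, a j = (F.card : ℤ) - n * k₁ := by
    simp only [ha]
    rw [Finset.sum_sub_distrib, Finset.sum_const, Finset.card_univ, ZMod.card,
      nsmul_eq_mul]
    rw [← hsum]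
    push_cast
    ring
  rw [hasum] at hseq
  -- conclude in ℚ
  have hfin : (n : ℤ) ≤ 2 * ((F.card : ℤ) - n * k₁) := hseq
  have hdom : domNum (ZMod m × ZMod n) (prodArc (cycArc m) (cycArc n)) = F.card := by
    rw [domNum, ← hWcard, hFcard]
  rw [hdom]
  have : (n : ℚ) ≤ 2 * ((F.card : ℚ) - n * k₁) := by exact_mod_cast hfin
  linarith
end

section
/- For m, n ≥ 2 with m ≡ 2 (mod 3), writing k_1 = ⌊m/3⌋, the domination number of C_m □ C_n satisfies γ(C_m □ C_n) ≥ n·(k_1 + 1). -/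
open Finset

/-- Cyclic combinatorial lemma: integers with `2 c j + c (j-1) ≥ -1` have nonneg sum. -/
lemma cyc_sum_nonneg {n : ℕ} [NeZero n] (c : ZMod n → ℤ)
    (hc : ∀ j, -1 ≤ 2 * c j + c (j - 1)) : 0 ≤ ∑ j, c j := by
  classical
  set N : Finset (ZMod n) := univ.filter (fun j => c j < 0) with hN
  set N' : Finset (ZMod n) := N.image (· - 1) with hN'
  have hpos : ∀ j ∈ N, 1 ≤ c (j - 1) := by
    intro j hj
    have hj' : c j < 0 := (mem_filter.mp hj).2
    have := hc j; omega
  have hdisj : Disjoint N N' := by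
    rw [Finset.disjoint_left]
    intro x hx hx'
    obtain ⟨j, hj, rfl⟩ := Finset.mem_image.mp hx'
    have := hpos j hj
    have : c (j - 1) < 0 := (mem_filter.mp hx).2
    omega
  have hsumN' : ∑ x ∈ N', c x = ∑ j ∈ N, c (j - 1) := by
    rw [hN', Finset.sum_image]
    intro a _ b _ h
    exact sub_left_injective h
  have hpair : 0 ≤ ∑ x ∈ N ∪ N', c x := by
    rw [Finset.sum_union hdisj, hsumN', ← Finset.sum_add_distrib]
    apply Finset.sum_nonneg
    intro j hj
    have h1 : c j < 0 := (mem_filter.mp hj).2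
    have := hc j; omega
  have hrest : 0 ≤ ∑ x ∈ (N ∪ N')ᶜ, c x := by
    apply Finset.sum_nonneg
    intro j hj
    rw [Finset.mem_compl, Finset.mem_union, not_or] at hj
    have : j ∉ N := hj.1
    simp only [hN, mem_filter, mem_univ, true_and, not_lt] at this
    exact this
  have := Finset.sum_add_sum_compl (N ∪ N') c
  omega

theorem stmt_3 (m n k₁ : ℕ) (hm : 2 ≤ m) (hn : 2 ≤ n)
    (hmod : m % 3 = 2) (hk₁ : k₁ = m / 3) :
    n * (k₁ + 1) ≤ domNum (ZMod m × ZMod n) (prodArc (cycArc m) (cycArc n)) := by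
  classical
  haveI : NeZero m := ⟨by omega⟩
  haveI : NeZero n := ⟨by omega⟩
  have hm3 : m = 3 * k₁ + 2 := by omega
  -- the set defining domNum is nonempty
  have hne : {k | ∃ W : Set (ZMod m × ZMod n),
      IsDomSet (prodArc (cycArc m) (cycArc n)) W ∧ W.ncard = k}.Nonempty :=
    ⟨(Set.univ : Set (ZMod m × ZMod n)).ncard, Set.univ,
      fun v => ⟨v, Set.mem_univ v, Or.inl rfl⟩, rfl⟩
  have hmem := Nat.sInf_mem hne
  obtain ⟨W, hW, hcard⟩ := hmem
  rw [domNum, ← hcard]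
  -- pass to Finset
  have hWfin : W.Finite := Set.toFinite W
  set F : Finset (ZMod m × ZMod n) := hWfin.toFinset with hF
  have hFmem : ∀ p, p ∈ F ↔ p ∈ W := fun p => hWfin.mem_toFinset
  rw [Set.ncard_eq_toFinset_card' W]
  have hFcard : W.toFinset = F := by
    ext p; simp [hFmem]
  rw [hFcard]
  set a : ZMod n → ℕ := fun j => (F.filter (fun p => p.2 = j)).card with ha
  have hsum : F.card = ∑ j, a j := by
    exact Finset.card_eq_sum_card_fiberwise (fun x _ => Finset.mem_univ x.2)
  -- column sets
  set S : ZMod n → Finset (ZMod m) :=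
    fun j => (F.filter (fun p => p.2 = j)).image Prod.fst with hS
  have hScard : ∀ j, (S j).card ≤ a j := fun j => Finset.card_image_le
  have hcover : ∀ j : ZMod n, m ≤ 2 * a j + a (j - 1) := by
    intro j
    have hsub : (univ : Finset (ZMod m)) ⊆ S j ∪ (S j).image (· + 1) ∪ S (j - 1) := by
      intro x _
      obtain ⟨u, huW, hu⟩ := hW (x, j)
      have huF : u ∈ F := (hFmem u).mpr huW
      rcases hu with rfl | harc
      · apply Finset.mem_union_left; apply Finset.mem_union_left
        exact Finset.mem_image.mpr ⟨(x, j), Finset.mem_filter.mpr ⟨huF, rfl⟩, rfl⟩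
      · rcases harc with ⟨h1, h2⟩ | ⟨h1, h2⟩
        · -- x = u.1 + 1, u.2 = j
          apply Finset.mem_union_left; apply Finset.mem_union_right
          apply Finset.mem_image.mpr
          refine ⟨u.1, Finset.mem_image.mpr ⟨u, Finset.mem_filter.mpr ⟨huF, h2⟩, rfl⟩, ?_⟩
          exact h1.symm
        · -- j = u.2 + 1, u.1 = x
          apply Finset.mem_union_right
          have h1' : j = u.2 + 1 := h1
          have hu2 : u.2 = j - 1 := by rw [h1']; ring
          exact Finset.mem_image.mpr ⟨u, Finset.mem_filter.mpr ⟨huF, hu2⟩, h2⟩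
    have hcard1 := Finset.card_le_card hsub
    have h2 := Finset.card_union_le (S j ∪ (S j).image (· + 1)) (S (j - 1))
    have h3 := Finset.card_union_le (S j) ((S j).image (· + 1))
    have h4 : ((S j).image (· + 1)).card ≤ (S j).card := Finset.card_image_le
    have h5 := hScard j
    have h6 := hScard (j - 1)
    have hcardU : (univ : Finset (ZMod m)).card = m := by simp [ZMod.card]
    omega
  -- integer deficiency
  set c : ZMod n → ℤ := fun j => (a j : ℤ) - (k₁ + 1) with hcdef
  have hc : ∀ j, -1 ≤ 2 * c j + c (j - 1) := by
    intro j
    have := hcover j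
    simp only [hcdef]
    push_cast
    omega
  have hnneg := cyc_sum_nonneg c hc
  have hsplit : ∑ j, c j = (∑ j, (a j : ℤ)) - n * (k₁ + 1) := by
    simp only [hcdef]
    rw [Finset.sum_sub_distrib, Finset.sum_const]
    simp [ZMod.card]
  have hfin : (n : ℤ) * (k₁ + 1) ≤ ∑ j, (a j : ℤ) := by omega
  have : (∑ j, (a j : ℤ)) = ((∑ j, a j : ℕ) : ℤ) := by push_cast; ring
  rw [this] at hfin
  have : n * (k₁ + 1) ≤ ∑ j, a j := by exact_mod_cast hfin
  omega
end

section
/- Let m = 3k_1 + 2 and let A = {0} ∪ {2+3p : p = 0,...,k_1−1} ⊆ Z/mZ, and for i ∈ Z/mZ let A_i = {j : j − i (mod m) ∈ A}. Then for every i, the set of vertices of the directed cycle C_m not dominated by A_i equals {i+4, i+7, ..., i−4, i−1} (all arithmetic mod m), and this set is contained both in A_{i+2} and in A_{i−1}. -/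
private lemma zmod_cast_inj {m : ℕ} (a b : ℕ) (ha : a < m) (hb : b < m)
    (h : (a : ZMod m) = b) : a = b := by
  haveI : NeZero m := ⟨by omega⟩
  have := congrArg ZMod.val h
  rwa [ZMod.val_cast_of_lt ha, ZMod.val_cast_of_lt hb] at this

private lemma key_lemma (m k₁ : ℕ) (hm : m = 3 * k₁ + 2) (w : ZMod m) :
    ¬ ((w = 0 ∨ ∃ p, p < k₁ ∧ (2 + 3 * (p : ZMod m)) = w) ∨
       (w - 1 = 0 ∨ ∃ p, p < k₁ ∧ (2 + 3 * (p : ZMod m)) = w - 1)) ↔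
    ∃ p, p < k₁ ∧ w = 4 + 3 * (p : ZMod m) := by
  haveI : NeZero m := ⟨by omega⟩
  have hnm : w.val < m := ZMod.val_lt w
  set n := w.val with hn
  have hw : w = (n : ZMod m) := by rw [hn, ZMod.natCast_val, ZMod.cast_id]
  have conv : ∀ c : ℕ, c < m → (w = (c : ZMod m) ↔ n = c) := by
    intro c hc
    constructor
    · intro h
      exact zmod_cast_inj n c hnm hc (hw ▸ h)
    · intro h; rw [hw, h]
  have h0 : (w = 0) ↔ n = 0 := by
    have := conv 0 (by omega); simpa using this
  have h1 : (w - 1 = 0) ↔ n = 1 := by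
    rw [sub_eq_zero]
    have := conv 1 (by omega); simpa using this
  have h2 : ∀ p : ℕ, p < k₁ → (((2 + 3 * (p : ZMod m)) = w) ↔ n = 2 + 3 * p) := by
    intro p hp
    rw [eq_comm]
    have : ((2 + 3 * p : ℕ) : ZMod m) = 2 + 3 * (p : ZMod m) := by push_cast; ring
    rw [← this]
    exact conv _ (by omega)
  have h3 : ∀ p : ℕ, p < k₁ → (((2 + 3 * (p : ZMod m)) = w - 1) ↔ n = 3 + 3 * p) := by
    intro p hp
    rw [eq_comm, sub_eq_iff_eq_add]
    have : ((3 + 3 * p : ℕ) : ZMod m) = 2 + 3 * (p : ZMod m) + 1 := by push_cast; ring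
    rw [← this]
    exact conv _ (by omega)
  have h4 : ∀ p : ℕ, p < k₁ → ((w = 4 + 3 * (p : ZMod m)) ↔ n = 4 + 3 * p) := by
    intro p hp
    have : ((4 + 3 * p : ℕ) : ZMod m) = 4 + 3 * (p : ZMod m) := by push_cast; ring
    rw [← this]
    exact conv _ (by omega)
  constructor
  · intro H
    push_neg at H
    obtain ⟨⟨H0, H2⟩, H1, H3⟩ := H
    simp only [ne_eq, h0] at H0
    simp only [ne_eq, h1] at H1
    have H2' : ∀ p, p < k₁ → n ≠ 2 + 3 * p := by
      intro p hp hne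
      exact H2 p hp ((h2 p hp).mpr hne)
    have H3' : ∀ p, p < k₁ → n ≠ 3 + 3 * p := by
      intro p hp hne
      exact H3 p hp ((h3 p hp).mpr hne)
    have K2 := H2' ((n - 2) / 3)
    have K3 := H3' ((n - 3) / 3)
    refine ⟨(n - 4) / 3, by omega, (h4 _ (by omega)).mpr (by omega)⟩
  · rintro ⟨p, hp, hwp⟩
    have hnp : n = 4 + 3 * p := (h4 p hp).mp hwp
    push_neg
    refine ⟨⟨?_, ?_⟩, ?_, ?_⟩
    · simp only [ne_eq, h0]; omega
    · intro q hq; simp only [ne_eq, h2 q hq]; omega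
    · simp only [ne_eq, h1]; omega
    · intro q hq; simp only [ne_eq, h3 q hq]; omega

theorem stmt_5 (m k₁ : ℕ) (hm : m = 3 * k₁ + 2)
    (A : Set (ZMod m))
    (hA : A = {0} ∪ (fun p : ℕ => (2 + 3 * p : ZMod m)) '' Set.Iio k₁)
    (Atr : ZMod m → Set (ZMod m))
    (hAtr : ∀ i : ZMod m, Atr i = {j | j - i ∈ A}) :
    ∀ i : ZMod m,
      {v : ZMod m | ¬ ∃ u ∈ Atr i, u = v ∨ cycArc m u v} =
        (fun p : ℕ => (i + 4 + 3 * p : ZMod m)) '' Set.Iio k₁ ∧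
      (fun p : ℕ => (i + 4 + 3 * p : ZMod m)) '' Set.Iio k₁ ⊆ Atr (i + 2) ∧
      (fun p : ℕ => (i + 4 + 3 * p : ZMod m)) '' Set.Iio k₁ ⊆ Atr (i - 1) := by
  haveI : NeZero m := ⟨by omega⟩
  intro i
  have memA : ∀ w : ZMod m, w ∈ A ↔ (w = 0 ∨ ∃ p, p < k₁ ∧ (2 + 3 * (p : ZMod m)) = w) := by
    intro w
    rw [hA]
    simp [Set.mem_image, Set.mem_Iio]
  refine ⟨?_, ?_, ?_⟩
  · ext v
    simp only [Set.mem_setOf_eq, hAtr, Set.mem_image, Set.mem_Iio]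
    have step : (∃ u, u - i ∈ A ∧ (u = v ∨ cycArc m u v)) ↔
        ((v - i) ∈ A ∨ (v - i) - 1 ∈ A) := by
      constructor
      · rintro ⟨u, hu, rfl | hc⟩
        · exact Or.inl hu
        · rw [cycArc] at hc
          subst hc
          right
          have e : u + 1 - i - 1 = u - i := by ring
          rwa [e]
      · rintro (h | h)
        · exact ⟨v, h, Or.inl rfl⟩
        · refine ⟨v - 1, ?_, Or.inr ?_⟩
          · have e : v - 1 - i = v - i - 1 := by ring
            rwa [e]
          · rw [cycArc]; ring
    rw [step]
    rw [memA, memA]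
    rw [key_lemma m k₁ hm (v - i)]
    constructor
    · rintro ⟨p, hp, hv⟩
      refine ⟨p, hp, ?_⟩
      have := sub_eq_iff_eq_add'.mp hv
      rw [this]; ring
    · rintro ⟨p, hp, hv⟩
      exact ⟨p, hp, by rw [← hv]; ring⟩
  · rintro x ⟨p, hp, rfl⟩
    rw [hAtr]
    simp only [Set.mem_setOf_eq, memA]
    right
    exact ⟨p, hp, by ring⟩
  · rintro x ⟨p, hp, rfl⟩
    rw [hAtr]
    simp only [Set.mem_setOf_eq, memA]
    rcases eq_or_lt_of_le (Nat.succ_le_of_lt hp) with he | hl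
    · left
      have : ((3 * k₁ + 2 : ℕ) : ZMod m) = 0 := by rw [← hm]; exact ZMod.natCast_self m
      have h5 : (i + 4 + 3 * (p : ZMod m)) - (i - 1) = ((3 * k₁ + 2 : ℕ) : ZMod m) := by
        have hk : (k₁ : ZMod m) = (p : ZMod m) + 1 := by
          rw [← he]; push_cast; ring
        push_cast
        rw [hk]
        ring
      rw [h5, this]
    · right
      exact ⟨p + 1, hl, by push_cast; ring⟩
end

section
/- Let m = 3k_1 + 2 ≥ 2 and n ≥ 2. Let A = {0} ∪ {2+3p : p = 0,...,k_1−1} ⊆ Z/mZ and A_i its translate by i. Suppose S ⊆ V(C_m □ C_n) satisfies: for each j ∈ {0,...,n−1} there is an index i_j ∈ Z/mZ with S ∩ C_m^j = A_{i_j} × {j}, and for each j (indices of columns taken mod n) i_j ≡ i_{j−1} + 1 (mod m) or i_j ≡ i_{j−1} − 2 (mod m). Then S is a dominating set of C_m □ C_n. -/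
lemma key (m k₁ : ℕ) (hm : m = 3 * k₁ + 2) (A : Set (ZMod m))
    (hA : A = {0} ∪ (fun p : ℕ => (2 + 3 * p : ZMod m)) '' Set.Iio k₁)
    (a : ZMod m) :
    a ∈ A ∨ a - 1 ∈ A ∨ (a + 1 ∈ A ∧ a - 2 ∈ A) := by
  have hm0 : NeZero m := ⟨by omega⟩
  have hmem : ∀ b : ZMod m, (b = 0 ∨ ∃ p : ℕ, p < k₁ ∧ b = 2 + 3 * (p : ZMod m)) → b ∈ A := by
    intro b hb
    rw [hA]
    rcases hb with h | ⟨p, hp, h⟩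
    · exact Or.inl h
    · exact Or.inr ⟨p, hp, h.symm⟩
  have ha : a = ((a.val : ℕ) : ZMod m) := (ZMod.natCast_zmod_val a).symm
  have hlt : a.val < m := ZMod.val_lt a
  set r := a.val with hr
  have hsplit : r = 0 ∨ (∃ p, p < k₁ ∧ r = 2 + 3 * p) ∨ (∃ p, p < k₁ ∧ r = 3 * (p+1))
      ∨ r = 1 ∨ (∃ p, p + 1 < k₁ ∧ r = 1 + 3 * (p+1)) ∨ (r = 3 * k₁ + 1 ∧ 1 ≤ k₁) := by
    obtain ⟨q, s, hs3, hrqs⟩ : ∃ q s, s < 3 ∧ r = 3 * q + s :=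
      ⟨r / 3, r % 3, Nat.mod_lt _ (by norm_num), by omega⟩
    rcases show s = 0 ∨ s = 1 ∨ s = 2 by omega with rfl | rfl | rfl
    · rcases q with _ | p
      · left; omega
      · right; right; left; exact ⟨p, by omega, by omega⟩
    · rcases q with _ | p
      · right; right; right; left; omega
      · by_cases hq : p + 1 = k₁
        · right; right; right; right; right; exact ⟨by omega, by omega⟩
        · right; right; right; right; left; exact ⟨p, by omega, by omega⟩
    · right; left; exact ⟨q, by omega, by omega⟩
  rcases hsplit with h | ⟨p, hp, h⟩ | ⟨p, hp, h⟩ | h | ⟨p, hp, h⟩ | ⟨h, hk⟩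
  · left; apply hmem; left; rw [ha, h]; simp
  · left; apply hmem; right; exact ⟨p, hp, by rw [ha, h]; push_cast; ring⟩
  · right; left; apply hmem; right
    refine ⟨p, hp, ?_⟩
    rw [ha, h]; push_cast; ring
  · right; left; apply hmem; left; rw [ha, h]; simp
  · right; right
    constructor
    · apply hmem; right
      exact ⟨p + 1, hp, by rw [ha, h]; push_cast; ring⟩
    · apply hmem; right
      exact ⟨p, by omega, by rw [ha, h]; push_cast; ring⟩
  · right; right
    have hms : ((m : ℕ) : ZMod m) = 0 := ZMod.natCast_self m
    constructor
    · apply hmem; left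
      rw [ha, h]
      have : ((3 * k₁ + 1 : ℕ) : ZMod m) + 1 = ((3 * k₁ + 2 : ℕ) : ZMod m) := by push_cast; ring
      rw [this, ← hm, hms]
    · apply hmem; right
      obtain ⟨k', rfl⟩ : ∃ k', k₁ = k' + 1 := ⟨k₁ - 1, by omega⟩
      refine ⟨k', by omega, ?_⟩
      rw [ha, h]; push_cast; ring

theorem stmt_6 (m n k₁ : ℕ) (hm : m = 3 * k₁ + 2) (hm2 : 2 ≤ m) (hn : 2 ≤ n)
    (A : Set (ZMod m))
    (hA : A = {0} ∪ (fun p : ℕ => (2 + 3 * p : ZMod m)) '' Set.Iio k₁)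
    (S : Set (ZMod m × ZMod n)) (idx : ZMod n → ZMod m)
    (hS : ∀ j : ZMod n, {k : ZMod m | (k, j) ∈ S} = {x | x - idx j ∈ A})
    (hstep : ∀ j : ZMod n, idx j = idx (j - 1) + 1 ∨ idx j = idx (j - 1) - 2) :
    IsDomSet (prodArc (cycArc m) (cycArc n)) S := by
  rintro ⟨x, j⟩
  have hmem : ∀ y : ZMod m, (y, j) ∈ S ↔ y - idx j ∈ A := fun y =>
    Set.ext_iff.mp (hS j) y
  have hmem' : ∀ y : ZMod m, (y, j - 1) ∈ S ↔ y - idx (j - 1) ∈ A := fun y =>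
    Set.ext_iff.mp (hS (j - 1)) y
  rcases key m k₁ hm A hA (x - idx j) with h | h | ⟨h1, h2⟩
  · exact ⟨(x, j), (hmem x).mpr h, Or.inl rfl⟩
  · refine ⟨(x - 1, j), (hmem (x - 1)).mpr (by rw [show x - 1 - idx j = x - idx j - 1 by ring]; exact h), Or.inr ?_⟩
    exact Or.inl ⟨by simp [cycArc], rfl⟩
  · refine ⟨(x, j - 1), (hmem' x).mpr ?_, Or.inr (Or.inr ⟨by simp [cycArc], rfl⟩)⟩
    rcases hstep j with hs | hs
    · rw [show x - idx (j - 1) = x - idx j + 1 by rw [hs]; ring]; exact h1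
    · rw [show x - idx (j - 1) = x - idx j - 2 by rw [hs]; ring]; exact h2
end

section
/- Let m = 3k_1 + 2 ≥ 2 and n ≥ 2. If there exist nonnegative integers a, b with a + b = n − 1 and (a − 2b ≡ 2 (mod m) or a − 2b ≡ m − 1 (mod m)), then γ(C_m □ C_n) = n(k_1 + 1). -/
/-- Combinatorial core of the lower bound: if the column counts `w j` of a dominating set
satisfy `3k₁+2 ≤ w (j-1) + 2 w j` for all `j`, then their sum is at least `n(k₁+1)`. -/
lemma stmt7_sum_lower (n k₁ : ℕ) [NeZero n] (w : ZMod n → ℕ)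
    (h : ∀ j, 3 * k₁ + 2 ≤ w (j - 1) + 2 * w j) :
    n * (k₁ + 1) ≤ ∑ j, w j := by
  set K := k₁ + 1 with hK
  have key : ∀ j : ZMod n, K - w j ≤ w (j - 1) - K := by
    intro j
    have := h j
    omega
  have h1 : ∑ j : ZMod n, (K - w j) ≤ ∑ j : ZMod n, (w (j - 1) - K) :=
    Finset.sum_le_sum fun j _ => key j
  have h2 : ∑ j : ZMod n, (w (j - 1) - K) = ∑ j : ZMod n, (w j - K) :=
    Fintype.sum_equiv (Equiv.subRight (1 : ZMod n)) _ _ (fun j => rfl)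
  have h3 : ∑ j : ZMod n, (w j + (K - w j)) = ∑ j : ZMod n, (K + (w j - K)) := by
    apply Finset.sum_congr rfl
    intro j _
    omega
  rw [Finset.sum_add_distrib, Finset.sum_add_distrib] at h3
  have h4 : ∑ _j : ZMod n, K = n * K := by
    simp [Finset.sum_const, ZMod.card n, mul_comm]
  omega

/-- Column inequality: the `m` vertices of column `j` are dominated by vertices of
column `j` (each covering at most two of them) and column `j-1` (each covering one). -/
lemma stmt7_col_ineq (m n : ℕ) [NeZero m] [NeZero n]
    (F : Finset (ZMod m × ZMod n))
    (hdom : ∀ v, ∃ u ∈ F, u = v ∨ prodArc (cycArc m) (cycArc n) u v)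
    (j : ZMod n) :
    m ≤ (F.filter (fun u => u.2 = j - 1)).card + 2 * (F.filter (fun u => u.2 = j)).card := by
  classical
  set S1 : Finset (ZMod m) := (F.filter (fun u => u.2 = j)).image Prod.fst with hS1
  set S2 : Finset (ZMod m) := (F.filter (fun u => u.2 = j)).image (fun u => u.1 + 1) with hS2
  set S3 : Finset (ZMod m) := (F.filter (fun u => u.2 = j - 1)).image Prod.fst with hS3
  have hsub : (Finset.univ : Finset (ZMod m)) ⊆ S1 ∪ S2 ∪ S3 := by
    intro x _
    obtain ⟨u, huF, hcase⟩ := hdom (x, j)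
    simp only [Finset.mem_union, hS1, hS2, hS3, Finset.mem_image, Finset.mem_filter]
    rcases hcase with h | h
    · exact Or.inl (Or.inl ⟨u, ⟨huF, congrArg Prod.snd h⟩, congrArg Prod.fst h⟩)
    · rcases h with ⟨h1, h2⟩ | ⟨h1, h2⟩
      · exact Or.inl (Or.inr ⟨u, ⟨huF, h2⟩, h1.symm⟩)
      · refine Or.inr ⟨u, ⟨huF, ?_⟩, h2⟩
        have : j = u.2 + 1 := h1
        rw [this]; ring
  have h1 : m = (Finset.univ : Finset (ZMod m)).card := by simp [ZMod.card m]
  calc m = (Finset.univ : Finset (ZMod m)).card := h1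
    _ ≤ (S1 ∪ S2 ∪ S3).card := Finset.card_le_card hsub
    _ ≤ (S1 ∪ S2).card + S3.card := Finset.card_union_le _ _
    _ ≤ S1.card + S2.card + S3.card := by
        have := Finset.card_union_le S1 S2; omega
    _ ≤ (F.filter (fun u => u.2 = j)).card + (F.filter (fun u => u.2 = j)).card
        + (F.filter (fun u => u.2 = j - 1)).card := by
        rw [hS1, hS2, hS3]
        have := Finset.card_image_le (s := F.filter (fun u => u.2 = j)) (f := Prod.fst)
        have := Finset.card_image_le (s := F.filter (fun u => u.2 = j)) (f := fun u => u.1 + 1)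
        have := Finset.card_image_le (s := F.filter (fun u => u.2 = j - 1)) (f := Prod.fst)
        omega
    _ = _ := by ring

/-- Upper bound: construction of a dominating set of size `n(k₁+1)` from the
congruence condition on `a, b`. -/
lemma stmt7_upper (m n k₁ a b : ℕ) [NeZero m] [NeZero n] (hm : m = 3 * k₁ + 2) (hn : 2 ≤ n)
    (hab : a + b = n - 1)
    (hmod : (a:ℤ) - 2*b ≡ 2 [ZMOD (m:ℤ)] ∨ (a:ℤ) - 2*b ≡ (m:ℤ) - 1 [ZMOD (m:ℤ)]) :
    ∃ W : Set (ZMod m × ZMod n), IsDomSet (prodArc (cycArc m) (cycArc n)) W ∧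
      W.ncard = n * (k₁ + 1) := by
  classical
  have han : a ≤ n - 1 := by omega
  set sInt : ℕ → ℤ := fun j => if j ≤ a then (j:ℤ) else (a:ℤ) - 2*((j:ℤ) - a) with hsInt
  set sZ : ℕ → ZMod m := fun j => ((sInt j : ℤ) : ZMod m) with hsZ
  set f : ℕ × ℕ → ZMod m × ZMod n :=
    fun p => (sZ p.1 + ((3 * p.2 : ℕ) : ZMod m), ((p.1 : ℕ) : ZMod n)) with hf
  set D : Finset (ℕ × ℕ) := Finset.range n ×ˢ Finset.range (k₁+1) with hD
  -- step facts
  have F1 : ∀ j : ℕ, 1 ≤ j → sInt j = sInt (j-1) + 1 ∨ sInt j = sInt (j-1) - 2 := by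
    intro j hj
    simp only [hsInt]
    split_ifs <;> push_cast <;> omega
  have F2 : sInt (n-1) = (a:ℤ) - 2*b := by
    simp only [hsInt]
    split_ifs <;> push_cast <;> omega
  have F0 : sInt 0 = 0 := by simp [hsInt]
  have wrap : sZ 0 = sZ (n-1) + 1 ∨ sZ 0 = sZ (n-1) - 2 := by
    simp only [hsZ, F0, F2]
    rcases hmod with h | h
    · right
      have : (((a:ℤ) - 2*b : ℤ) : ZMod m) = ((2:ℤ) : ZMod m) :=
        (ZMod.intCast_eq_intCast_iff _ _ _).mpr h
      rw [this]; push_cast; ring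
    · left
      have : (((a:ℤ) - 2*b : ℤ) : ZMod m) = (((m:ℤ) - 1 : ℤ) : ZMod m) :=
        (ZMod.intCast_eq_intCast_iff _ _ _).mpr h
      rw [this]; push_cast [ZMod.natCast_self]; ring
  refine ⟨↑(D.image f), ?_, ?_⟩
  · -- domination
    rintro ⟨x, y⟩
    have hyv : ((y.val : ℕ) : ZMod n) = y := by simp [ZMod.natCast_val, ZMod.cast_id]
    set j : ℕ := y.val with hj
    have hjn : j < n := y.val_lt
    set r : ℕ := (x - sZ j).val with hr
    have hrm : r < m := (x - sZ j).val_lt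
    have hxr : x = sZ j + ((r : ℕ) : ZMod m) := by
      rw [hr, ZMod.natCast_val, ZMod.cast_id]; ring
    set i : ℕ := r / 3 with hi
    have hmem : ∀ p : ℕ × ℕ, p.1 < n → p.2 < k₁ + 1 → f p ∈ (↑(D.image f) : Set _) := by
      intro p h1 h2
      simp only [Finset.coe_image, Set.mem_image, Finset.mem_coe, hD, Finset.mem_product,
        Finset.mem_range]
      exact ⟨p, ⟨h1, h2⟩, rfl⟩
    rcases (by omega : r % 3 = 0 ∨ r % 3 = 1 ∨ r % 3 = 2) with h3 | h3 | h3
    · -- r = 3i : in W itself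
      have hik : i < k₁ + 1 := by omega
      refine ⟨f (j, i), hmem (j, i) hjn hik, Or.inl ?_⟩
      simp only [hf]
      have : (3 * i : ℕ) = r := by omega
      rw [this, ← hxr, hyv]
    · -- r = 3i+1 : dominated within column
      have hik : i < k₁ + 1 := by omega
      refine ⟨f (j, i), hmem (j, i) hjn hik, Or.inr (Or.inl ⟨?_, ?_⟩)⟩
      · show x = sZ j + ((3 * i : ℕ) : ZMod m) + 1
        have : (r : ℕ) = 3 * i + 1 := by omega
        rw [hxr, this]; push_cast; ring
      · exact hyv
    · -- r = 3i+2 : dominated from previous column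
      have hik : i + 1 < k₁ + 1 := by omega
      set j' : ℕ := if j = 0 then n - 1 else j - 1 with hj'
      have hj'n : j' < n := by simp only [hj']; split_ifs <;> omega
      have hj'c : ((j' : ℕ) : ZMod n) = y - 1 := by
        simp only [hj']
        split_ifs with h0
        · rw [← hyv, h0]
          push_cast [Nat.cast_sub (by omega : 1 ≤ n), ZMod.natCast_self]
          ring
        · rw [← hyv]
          push_cast [Nat.cast_sub (by omega : 1 ≤ j)]
          ring
      have hshift : sZ j = sZ j' + 1 ∨ sZ j = sZ j' - 2 := by
        simp only [hj']
        split_ifs with h0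
        · rw [h0]; exact wrap
        · rcases F1 j (by omega) with h | h <;> simp only [hsZ, h] <;> push_cast <;>
            [left; right] <;> ring
      rcases hshift with hs | hs
      · -- use (sZ j' + 3(i+1), j-1)
        refine ⟨f (j', i+1), hmem (j', i+1) hj'n hik, Or.inr (Or.inr ⟨?_, ?_⟩)⟩
        · show y = ((j' : ℕ) : ZMod n) + 1
          rw [hj'c]; ring
        · show sZ j' + ((3 * (i+1) : ℕ) : ZMod m) = x
          have : (r : ℕ) = 3 * i + 2 := by omega
          rw [hxr, hs, this]; push_cast; ring
      · refine ⟨f (j', i), hmem (j', i) hj'n (by omega), Or.inr (Or.inr ⟨?_, ?_⟩)⟩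
        · show y = ((j' : ℕ) : ZMod n) + 1
          rw [hj'c]; ring
        · show sZ j' + ((3 * i : ℕ) : ZMod m) = x
          have : (r : ℕ) = 3 * i + 2 := by omega
          rw [hxr, hs, this]; push_cast; ring
  · -- cardinality
    rw [Set.ncard_coe_finset]
    rw [Finset.card_image_of_injOn, hD, Finset.card_product, Finset.card_range,
      Finset.card_range]
    intro p hp q hq hpq
    simp only [hD, Finset.mem_coe, Finset.mem_product, Finset.mem_range] at hp hq
    simp only [hf, Prod.mk.injEq] at hpq
    obtain ⟨hpq1, hpq2⟩ := hpq
    have h1 : p.1 = q.1 := by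
      have := congrArg ZMod.val hpq2
      rwa [ZMod.val_cast_of_lt hp.1, ZMod.val_cast_of_lt hq.1] at this
    have h2 : p.2 = q.2 := by
      rw [h1] at hpq1
      have h3 : ((3 * p.2 : ℕ) : ZMod m) = ((3 * q.2 : ℕ) : ZMod m) := by
        have := add_left_cancel hpq1
        exact this
      have := congrArg ZMod.val h3
      rw [ZMod.val_cast_of_lt (by omega : 3 * p.2 < m),
        ZMod.val_cast_of_lt (by omega : 3 * q.2 < m)] at this
      omega
    exact Prod.ext h1 h2

theorem stmt_7 (m n k₁ : ℕ) (hm : m = 3 * k₁ + 2) (hm2 : 2 ≤ m) (hn : 2 ≤ n)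
    (a b : ℕ) (hab : a + b = n - 1)
    (hmod : (a : ℤ) - 2 * b ≡ 2 [ZMOD (m : ℤ)] ∨
            (a : ℤ) - 2 * b ≡ (m : ℤ) - 1 [ZMOD (m : ℤ)]) :
    domNum (ZMod m × ZMod n) (prodArc (cycArc m) (cycArc n)) = n * (k₁ + 1) := by
  classical
  haveI : NeZero m := ⟨by omega⟩
  haveI : NeZero n := ⟨by omega⟩
  obtain ⟨W, hWdom, hWcard⟩ := stmt7_upper m n k₁ a b hm hn hab hmod
  have hmem : n * (k₁ + 1) ∈
      {k | ∃ W : Set (ZMod m × ZMod n),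
        IsDomSet (prodArc (cycArc m) (cycArc n)) W ∧ W.ncard = k} :=
    ⟨W, hWdom, hWcard⟩
  have hlb : ∀ k ∈ {k | ∃ W : Set (ZMod m × ZMod n),
      IsDomSet (prodArc (cycArc m) (cycArc n)) W ∧ W.ncard = k}, n * (k₁ + 1) ≤ k := by
    rintro k ⟨W', hdom, rfl⟩
    have hfin : W'.Finite := Set.toFinite W'
    set F : Finset (ZMod m × ZMod n) := hfin.toFinset with hF
    have hdomF : ∀ v, ∃ u ∈ F, u = v ∨ prodArc (cycArc m) (cycArc n) u v := by
      intro v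
      obtain ⟨u, hu, h⟩ := hdom v
      exact ⟨u, hfin.mem_toFinset.mpr hu, h⟩
    set w : ZMod n → ℕ := fun j => (F.filter (fun u => u.2 = j)).card with hw
    have hcol : ∀ j, 3 * k₁ + 2 ≤ w (j - 1) + 2 * w j := by
      intro j
      have := stmt7_col_ineq m n F hdomF j
      simp only [hw]
      omega
    have hsum : n * (k₁ + 1) ≤ ∑ j, w j := stmt7_sum_lower n k₁ w hcol
    have hcard : ∑ j, w j = F.card :=
      (Finset.card_eq_sum_card_fiberwise (f := Prod.snd) (t := Finset.univ)
        (fun x _ => Finset.mem_univ _)).symm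
    have hnc : W'.ncard = F.card := Set.ncard_eq_toFinset_card' W' ▸ by
      rw [hF, Set.Finite.card_toFinset]
      simp [Set.ncard_eq_toFinset_card']
    omega
  exact le_antisymm (Nat.sInf_le hmem) (le_csInf ⟨_, hmem⟩ hlb)
end

section
/- Let m, n ≥ 2 with m ≡ 2 (mod 3), k_1 = ⌊m/3⌋, and n ≡ 0 (mod 3). Then γ(C_m □ C_n) = n(k_1 + 1). -/
open Finset

section Aux

lemma val_sub_one' {M : ℕ} [NeZero M] (x : ZMod M) (hx : x ≠ 0) : (x - 1).val = x.val - 1 := by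
  have h1 : 1 ≤ x.val := Nat.pos_of_ne_zero (fun h => hx ((ZMod.val_eq_zero x).mp h))
  have h2 : x.val - 1 < M := lt_of_le_of_lt (Nat.sub_le _ _) (ZMod.val_lt x)
  have h3 : ((x.val - 1 : ℕ) : ZMod M) = x - 1 := by
    push_cast [h1]
    rw [ZMod.natCast_val, ZMod.cast_id]
  rw [← h3, ZMod.val_cast_of_lt h2]

lemma val_neg_one' {M : ℕ} [NeZero M] : ((-1 : ZMod M)).val = M - 1 := by
  have hM : 1 ≤ M := Nat.one_le_iff_ne_zero.mpr (NeZero.ne M)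
  have h1 : M - 1 < M := by omega
  have h2 : ((M-1:ℕ) : ZMod M) = -1 := by
    push_cast [hM]
    simp
  rw [← h2, ZMod.val_cast_of_lt h1]

/-- The construction predicate for the dominating set. -/
def consQ (m n : ℕ) (x : ZMod m) (y : ZMod n) : Prop :=
  x.val % 3 = y.val % 3 ∨ (y.val % 3 = 2 ∧ x.val = m - 1)

instance consQ.dec (m n : ℕ) (x : ZMod m) (y : ZMod n) : Decidable (consQ m n x y) := by
  unfold consQ; infer_instance

lemma cons_dom (m n : ℕ) (hm : 2 ≤ m) (hn : 2 ≤ n) (hmmod : m % 3 = 2) (hnmod : n % 3 = 0) :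
    IsDomSet (prodArc (cycArc m) (cycArc n)) {p : ZMod m × ZMod n | consQ m n p.1 p.2} := by
  haveI : NeZero m := ⟨by omega⟩
  haveI : NeZero n := ⟨by omega⟩
  rintro ⟨x, y⟩
  have hxv : x.val < m := ZMod.val_lt x
  have hyv : y.val < n := ZMod.val_lt y
  have hcases : x.val % 3 = y.val % 3 ∨ x.val % 3 = (y.val % 3 + 1) % 3
      ∨ x.val % 3 = (y.val % 3 + 2) % 3 := by omega
  rcases hcases with h | h | h
  · exact ⟨(x, y), Or.inl h, Or.inl rfl⟩
  · refine ⟨(x - 1, y), ?_, Or.inr (Or.inl ⟨by show x = (x-1)+1; ring, rfl⟩)⟩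
    show consQ m n (x-1) y
    by_cases hx0 : x = 0
    · right
      subst hx0
      simp only [ZMod.val_zero] at h
      constructor
      · omega
      · show ((0 : ZMod m) - 1).val = m - 1
        rw [zero_sub, val_neg_one']
    · left
      rw [val_sub_one' x hx0]
      have h1 : 1 ≤ x.val := Nat.pos_of_ne_zero (fun hh => hx0 ((ZMod.val_eq_zero x).mp hh))
      omega
  · refine ⟨(x, y - 1), ?_, Or.inr (Or.inr ⟨by show y = (y-1)+1; ring, rfl⟩)⟩
    show consQ m n x (y-1)
    left
    by_cases hy0 : y = 0
    · subst hy0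
      rw [zero_sub, val_neg_one']
      simp only [ZMod.val_zero] at h
      omega
    · rw [val_sub_one' y hy0]
      have h1 : 1 ≤ y.val := Nat.pos_of_ne_zero (fun hh => hy0 ((ZMod.val_eq_zero y).mp hh))
      omega

lemma filter_val_card {M : ℕ} [NeZero M] (p : ℕ → Prop) [DecidablePred p] :
    (Finset.univ.filter (fun x : ZMod M => p x.val)).card
      = ((Finset.range M).filter p).card := by
  refine Finset.card_nbij' (fun x => x.val) (fun j => (j : ZMod M)) ?_ ?_ ?_ ?_
  · intro x hx; simp only [Finset.mem_coe, Finset.mem_filter, Finset.mem_range] at *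
    exact ⟨ZMod.val_lt x, hx.2⟩
  · intro j hj; simp only [Finset.mem_coe, Finset.mem_filter, Finset.mem_range, mem_univ, true_and] at *
    rw [ZMod.val_cast_of_lt hj.1]; exact hj.2
  · intro x hx; simp [ZMod.natCast_val, ZMod.cast_id]
  · intro j hj; simp only [Finset.mem_coe, Finset.mem_filter, Finset.mem_range] at hj
    exact ZMod.val_cast_of_lt hj.1

lemma count1 (k r : ℕ) (hr : r < 2) :
    ((Finset.range (3*k+2)).filter (fun j => j % 3 = r)).card = k+1 := by
  rw [Finset.card_eq_of_bijective (fun i _ => 3*i+r)]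
  · intro j hj
    simp only [mem_filter, mem_range] at hj
    exact ⟨j/3, by omega, by omega⟩
  · intro i hi; simp only [mem_filter, mem_range]; omega
  · intro i j hi hj hij; omega

lemma count2 (k : ℕ) :
    ((Finset.range (3*k+2)).filter (fun j => j % 3 = 2 ∨ j = 3*k+1)).card = k+1 := by
  rw [Finset.card_eq_of_bijective (fun i _ => if i < k then 3*i+2 else 3*k+1)]
  · intro j hj
    simp only [mem_filter, mem_range] at hj
    rcases hj.2 with h | h
    · refine ⟨j/3, by omega, ?_⟩
      have : j/3 < k := by omega
      simp only [this, if_pos]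
      omega
    · exact ⟨k, by omega, by simp [h]⟩
  · intro i hi
    simp only [mem_filter, mem_range]
    by_cases h : i < k <;> simp [h] <;> omega
  · intro i j hi hj hij
    by_cases h1 : i < k <;> by_cases h2 : j < k <;> simp [h1, h2] at hij <;> omega

lemma col_count (m n k₁ : ℕ) [NeZero m] (hmmod : m % 3 = 2) (hk₁ : k₁ = m / 3) (y : ZMod n) :
    (Finset.univ.filter (fun x : ZMod m => consQ m n x y)).card = k₁ + 1 := by
  have hm32 : m = 3*k₁+2 := by omega
  have h1 : Finset.univ.filter (fun x : ZMod m => consQ m n x y)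
      = Finset.univ.filter (fun x : ZMod m =>
          x.val % 3 = y.val % 3 ∨ (y.val % 3 = 2 ∧ x.val = m - 1)) :=
    filter_congr (fun x _ => by simp only [consQ])
  rw [h1, filter_val_card (fun j => j % 3 = y.val % 3 ∨ (y.val % 3 = 2 ∧ j = m - 1))]
  have hr : y.val % 3 = 0 ∨ y.val % 3 = 1 ∨ y.val % 3 = 2 := by omega
  rcases hr with h | h | h
  · have heq : ∀ j ∈ Finset.range m,
        ((j % 3 = y.val % 3 ∨ (y.val % 3 = 2 ∧ j = m - 1)) ↔ j % 3 = 0) := by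
      intro j _; rw [h]; constructor <;> intro hh <;> omega
    rw [filter_congr heq, hm32]
    exact count1 k₁ 0 (by omega)
  · have heq : ∀ j ∈ Finset.range m,
        ((j % 3 = y.val % 3 ∨ (y.val % 3 = 2 ∧ j = m - 1)) ↔ j % 3 = 1) := by
      intro j _; rw [h]; constructor <;> intro hh <;> omega
    rw [filter_congr heq, hm32]
    exact count1 k₁ 1 (by omega)
  · have heq : ∀ j ∈ Finset.range m,
        ((j % 3 = y.val % 3 ∨ (y.val % 3 = 2 ∧ j = m - 1)) ↔ (j % 3 = 2 ∨ j = 3*k₁+1)) := by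
      intro j _; rw [h]; constructor <;> intro hh <;> omega
    rw [filter_congr heq, hm32]
    exact count2 k₁

lemma fiber_card {m n : ℕ} [NeZero m] [NeZero n] (Wcf : Finset (ZMod m × ZMod n))
    (q : ZMod m → ZMod n → Prop) [∀ x y, Decidable (q x y)]
    (hWcf : Wcf = Finset.univ.filter (fun p => q p.1 p.2)) (y : ZMod n) :
    (Wcf.filter (fun p => p.2 = y)).card
      = (Finset.univ.filter (fun x : ZMod m => q x y)).card := by
  subst hWcf
  refine Finset.card_nbij' (fun p => p.1) (fun x => (x, y)) ?_ ?_ ?_ ?_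
  · intro p hp
    simp only [Finset.mem_coe, filter_filter, Finset.mem_filter, mem_univ, true_and] at hp ⊢
    exact hp.2 ▸ hp.1
  · intro x hx
    simp only [Finset.mem_coe, filter_filter, Finset.mem_filter, mem_univ, true_and] at hx ⊢
    exact ⟨hx, trivial⟩
  · intro p hp
    simp only [Finset.mem_coe, filter_filter, Finset.mem_filter, mem_univ, true_and] at hp
    rw [← hp.2]
  · intro x _; rfl

lemma sum_lb (n k : ℕ) [NeZero n] (a : ZMod n → ℕ)
    (h : ∀ y, 3*k+2 ≤ 2 * a y + a (y-1)) :
    n * (k+1) ≤ ∑ y : ZMod n, a y := by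
  classical
  set Z : Finset (ZMod n) := univ.filter (fun y => a y ≤ k) with hZ
  have hinj : Function.Injective (fun y : ZMod n => y - 1) :=
    fun x y hxy => by simpa using sub_left_injective hxy
  set P : Finset (ZMod n) := Z.image (fun y => y - 1) with hP
  have hPcard : P.card = Z.card := card_image_of_injective _ hinj
  have hcons : ∀ y ∈ Z, y - 1 ∉ Z := by
    intro y hy hy1
    simp only [hZ, mem_filter, mem_univ, true_and] at hy hy1
    have := h y; omega
  have hdisj : Disjoint Z P := by
    rw [disjoint_right]
    intro y hyP hyZ
    simp only [hP, mem_image] at hyP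
    obtain ⟨z, hz, rfl⟩ := hyP
    exact hcons z hz hyZ
  have hsub : Z ∪ P ⊆ univ := subset_univ _
  have hsplit := Finset.sum_sdiff (f := a) hsub
  have hZP : ∑ y ∈ Z ∪ P, a y = ∑ y ∈ Z, (a y + a (y-1)) := by
    rw [sum_union hdisj, sum_image (fun x _ y _ => fun hxy => hinj hxy), ← sum_add_distrib]
  have hpair : ∀ y ∈ Z, 2*(k+1) ≤ a y + a (y-1) := by
    intro y hy
    simp only [hZ, mem_filter, mem_univ, true_and] at hy
    have := h y; omega
  have h1 : Z.card * (2*(k+1)) ≤ ∑ y ∈ Z ∪ P, a y := by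
    rw [hZP]
    calc Z.card * (2*(k+1)) = ∑ _y ∈ Z, 2*(k+1) := by rw [sum_const, smul_eq_mul]
    _ ≤ _ := sum_le_sum hpair
  have hcardZP : (Z ∪ P).card = 2 * Z.card := by
    rw [card_union_of_disjoint hdisj, hPcard]; ring
  have hle : 2 * Z.card ≤ n := by
    have h' := card_le_card hsub
    rwa [hcardZP, card_univ, ZMod.card] at h'
  have h2 : (n - 2*Z.card) * (k+1) ≤ ∑ y ∈ univ \ (Z ∪ P), a y := by
    have hcard : (univ \ (Z ∪ P)).card = n - 2*Z.card := by
      rw [card_sdiff_of_subset hsub, card_univ, ZMod.card, hcardZP]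
    calc (n - 2*Z.card) * (k+1) = ∑ _y ∈ univ \ (Z ∪ P), (k+1) := by
          rw [sum_const, smul_eq_mul, hcard]
    _ ≤ _ := by
          apply sum_le_sum
          intro y hy
          simp only [mem_sdiff, mem_union, not_or] at hy
          have hyZ : y ∉ Z := hy.2.1
          simp only [hZ, mem_filter, mem_univ, true_and, not_le] at hyZ
          omega
  have hfin : (n - 2*Z.card) * (k+1) + Z.card * (2*(k+1)) ≤ ∑ y : ZMod n, a y := by
    rw [← hsplit]
    exact Nat.add_le_add h2 h1
  calc n * (k+1) = (n - 2*Z.card + 2*Z.card) * (k+1) := by rw [Nat.sub_add_cancel hle]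
  _ = (n - 2*Z.card) * (k+1) + Z.card * (2*(k+1)) := by ring
  _ ≤ _ := hfin

lemma col_ineq (m n : ℕ) [NeZero m] [NeZero n] (hn : 2 ≤ n)
    (W : Set (ZMod m × ZMod n)) (hW : IsDomSet (prodArc (cycArc m) (cycArc n)) W)
    (Wf : Finset (ZMod m × ZMod n)) (hWf : ∀ p, p ∈ Wf ↔ p ∈ W)
    (y : ZMod n) :
    m ≤ 2 * (Wf.filter (fun p => p.2 = y)).card
        + (Wf.filter (fun p => p.2 = y - 1)).card := by
  classical
  haveI : Fact (1 < n) := ⟨by omega⟩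
  have hy1 : y - 1 ≠ y := by
    intro h
    have h2 : (1 : ZMod n) = 0 := by
      have := sub_eq_self.mp h
      simpa using this
    simp at h2
  choose u hu hd using hW
  set w : ZMod m → ZMod m × ZMod n := fun x => u (x, y) with hw
  have hcase : ∀ x, ((w x).2 = y ∧ ((w x).1 = x ∨ x = (w x).1 + 1))
      ∨ ((w x).2 = y - 1 ∧ (w x).1 = x) := by
    intro x
    rcases hd (x, y) with h | h | h
    · left; exact ⟨congrArg Prod.snd h, Or.inl (congrArg Prod.fst h)⟩
    · left; exact ⟨h.2, Or.inr h.1⟩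
    · right
      refine ⟨?_, h.2⟩
      have h3 : y = (w x).2 + 1 := h.1
      rw [h3]; ring
  set s1 : Finset (ZMod m) := univ.filter (fun x => (w x).2 = y) with hs1
  set s2 : Finset (ZMod m) := univ.filter (fun x => ¬ (w x).2 = y) with hs2
  have hcards : (univ : Finset (ZMod m)).card ≤ s1.card + s2.card := by
    rw [hs1, hs2, card_filter_add_card_filter_not]
  have hb1 : s1.card ≤ 2 * (Wf.filter (fun p => p.2 = y)).card := by
    have himg : s1.image w ⊆ Wf.filter (fun p => p.2 = y) := by
      intro b hb
      simp only [mem_image, hs1, mem_filter, mem_univ, true_and] at hb ⊢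
      obtain ⟨x, hx, rfl⟩ := hb
      exact ⟨(hWf _).mpr (hu (x, y)), hx⟩
    calc s1.card ≤ 2 * (s1.image w).card := by
          apply Finset.card_le_mul_card_image
          intro b hb
          have hsub : s1.filter (fun x => w x = b) ⊆ {b.1, b.1 + 1} := by
            intro x hx
            obtain ⟨hx1, hxb⟩ := mem_filter.mp hx
            have hxy : (w x).2 = y := by
              simpa [hs1] using hx1
            rcases hcase x with ⟨_, h1 | h1⟩ | ⟨h1, _⟩
            · simp only [mem_insert, mem_singleton]
              left; rw [← hxb, h1]
            · simp only [mem_insert, mem_singleton]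
              right; rw [← hxb]; exact h1
            · exact absurd hxy (by rw [h1]; exact hy1)
          calc (s1.filter (fun x => w x = b)).card ≤ ({b.1, b.1+1} : Finset (ZMod m)).card :=
                card_le_card hsub
          _ ≤ 2 := (card_insert_le _ _).trans (by simp)
    _ ≤ 2 * (Wf.filter (fun p => p.2 = y)).card :=
          Nat.mul_le_mul_left _ (card_le_card himg)
  have hb2 : s2.card ≤ (Wf.filter (fun p => p.2 = y - 1)).card := by
    have hprop : ∀ x ∈ s2, (w x).2 = y - 1 ∧ (w x).1 = x := by
      intro x hx
      simp only [hs2, mem_filter, mem_univ, true_and] at hx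
      rcases hcase x with ⟨h1, _⟩ | h1
      · exact absurd h1 hx
      · exact h1
    apply Finset.card_le_card_of_injOn w
    · intro x hx
      simp only [Finset.mem_coe, Finset.mem_filter]
      exact ⟨(hWf _).mpr (hu (x, y)), (hprop x hx).1⟩
    · intro x hx x' hx' hww
      have h1 := (hprop x hx).2
      have h2 := (hprop x' hx').2
      rw [hww] at h1
      rw [← h1, h2]
  calc m = (univ : Finset (ZMod m)).card := by rw [card_univ, ZMod.card]
  _ ≤ s1.card + s2.card := hcards
  _ ≤ _ := Nat.add_le_add hb1 hb2

end Aux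

theorem stmt_8 (m n k₁ : ℕ) (hm : 2 ≤ m) (hn : 2 ≤ n)
    (hmmod : m % 3 = 2) (hk₁ : k₁ = m / 3) (hnmod : n % 3 = 0) :
    domNum (ZMod m × ZMod n) (prodArc (cycArc m) (cycArc n)) = n * (k₁ + 1) := by
  classical
  haveI : NeZero m := ⟨by omega⟩
  haveI : NeZero n := ⟨by omega⟩
  have hm32 : m = 3*k₁+2 := by omega
  -- the construction
  set Wcf : Finset (ZMod m × ZMod n) := Finset.univ.filter (fun p => consQ m n p.1 p.2)
    with hWcf
  have hWcoe : (↑Wcf : Set (ZMod m × ZMod n)) = {p : ZMod m × ZMod n | consQ m n p.1 p.2} := by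
    ext p
    simp [hWcf]
  have hWcfcard : Wcf.card = n * (k₁ + 1) := by
    rw [Finset.card_eq_sum_card_fiberwise
      (f := Prod.snd) (t := Finset.univ) (fun x _ => Finset.mem_univ _)]
    have hcol : ∀ y : ZMod n, (Wcf.filter (fun p => p.2 = y)).card = k₁ + 1 := by
      intro y
      rw [fiber_card Wcf (consQ m n) hWcf y]
      exact col_count m n k₁ hmmod hk₁ y
    rw [Finset.sum_congr rfl (fun y _ => hcol y)]
    simp [Finset.card_univ, ZMod.card, mul_comm]
  have hmem : n * (k₁ + 1) ∈
      {k | ∃ W : Set (ZMod m × ZMod n),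
        IsDomSet (prodArc (cycArc m) (cycArc n)) W ∧ W.ncard = k} := by
    refine ⟨↑Wcf, ?_, ?_⟩
    · rw [hWcoe]
      exact cons_dom m n hm hn hmmod hnmod
    · rw [Set.ncard_coe_finset, hWcfcard]
  have hlb : ∀ c ∈ {k | ∃ W : Set (ZMod m × ZMod n),
      IsDomSet (prodArc (cycArc m) (cycArc n)) W ∧ W.ncard = k}, n * (k₁ + 1) ≤ c := by
    rintro c ⟨W, hdom, rfl⟩
    have hfin : W.Finite := Set.toFinite W
    set Wf : Finset (ZMod m × ZMod n) := hfin.toFinset with hWfdef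
    have hWfmem : ∀ p, p ∈ Wf ↔ p ∈ W := fun p => Set.Finite.mem_toFinset hfin
    have hWfcard : Wf.card = W.ncard := (Set.ncard_eq_toFinset_card W hfin).symm
    set a : ZMod n → ℕ := fun y => (Wf.filter (fun p => p.2 = y)).card with ha
    have hcons : ∀ y, 3*k₁+2 ≤ 2 * a y + a (y-1) := by
      intro y
      rw [← hm32]
      exact col_ineq m n hn W hdom Wf hWfmem y
    have hsum : ∑ y : ZMod n, a y = Wf.card := by
      rw [ha]
      exact (Finset.card_eq_sum_card_fiberwise
        (f := Prod.snd) (t := Finset.univ) (fun x _ => Finset.mem_univ _)).symm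
    calc n * (k₁ + 1) ≤ ∑ y : ZMod n, a y := sum_lb n k₁ a hcons
    _ = Wf.card := hsum
    _ = W.ncard := hWfcard
  exact le_antisymm (Nat.sInf_le hmem) (le_csInf ⟨_, hmem⟩ hlb)
end

section
/- Let m, n ≥ 2 with m ≡ 2 (mod 3), k_1 = ⌊m/3⌋, n = 3k_2 + 1, and 2k_2 ≥ k_1. Then γ(C_m □ C_n) = n(k_1 + 1). -/
lemma zmod_int_eq {M : ℕ} {a b : ℤ} (h : (M:ℤ) ∣ a - b) : ((a : ZMod M)) = (b : ZMod M) := by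
  have h0 : ((a - b : ℤ) : ZMod M) = 0 := (ZMod.intCast_zmod_eq_zero_iff_dvd _ _).2 h
  push_cast at h0
  exact sub_eq_zero.mp h0

lemma natcast_inj {M a b : ℕ} (ha : a < M) (hb : b < M) (h : (a : ZMod M) = (b : ZMod M)) : a = b := by
  haveI : NeZero M := ⟨by omega⟩
  have := congrArg ZMod.val h
  rwa [ZMod.val_cast_of_lt ha, ZMod.val_cast_of_lt hb] at this

lemma sum_lower {N K : ℕ} [NeZero N] (d : ZMod N → ℕ)
    (h : ∀ j, 3*K ≤ 2 * d j + d (j-1) + 1) :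
    N * K ≤ ∑ j, d j := by
  classical
  set P : Finset (ZMod N) := Finset.univ.filter (fun j => d j < K) with hP
  have key : ∀ j, d j < K → K ≤ d (j-1) ∧ 2*K ≤ d j + d (j-1) := by
    intro j hj; have := h j; omega
  set P' : Finset (ZMod N) := P.image (fun j => j - 1) with hP'
  have hinj : Set.InjOn (fun j : ZMod N => j - 1) P := by
    intro a _ b _ hab
    exact sub_left_inj.mp hab
  have hcardP' : P'.card = P.card := Finset.card_image_of_injOn hinj
  have hdisj : Disjoint P P' := by
    rw [Finset.disjoint_right]
    intro a haP' haP
    obtain ⟨b, hbP, hba⟩ := Finset.mem_image.1 haP'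
    have hb : d b < K := (Finset.mem_filter.1 hbP).2
    have ha : d a < K := (Finset.mem_filter.1 haP).2
    have := (key b hb).1
    rw [hba] at this
    omega
  have hPP' : ∑ j ∈ P ∪ P', d j = ∑ j ∈ P, (d j + d (j - 1)) := by
    rw [Finset.sum_union hdisj, hP', Finset.sum_image (fun a ha b hb hab => hinj ha hb hab),
      ← Finset.sum_add_distrib]
  have h1 : 2 * P.card * K ≤ ∑ j ∈ P ∪ P', d j := by
    rw [hPP']
    calc 2 * P.card * K = ∑ _j ∈ P, 2*K := by rw [Finset.sum_const, smul_eq_mul]; ring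
    _ ≤ _ := Finset.sum_le_sum (fun j hj => (key j (Finset.mem_filter.1 hj).2).2)
  have h2 : (P ∪ P')ᶜ.card * K ≤ ∑ j ∈ (P ∪ P')ᶜ, d j := by
    calc (P ∪ P')ᶜ.card * K = ∑ _j ∈ (P ∪ P')ᶜ, K := by rw [Finset.sum_const, smul_eq_mul]
    _ ≤ _ := by
      refine Finset.sum_le_sum (fun j hj => ?_)
      have hjP : j ∉ P := fun hjP => (Finset.mem_compl.1 hj) (Finset.mem_union_left _ hjP)
      by_contra hlt
      exact hjP (Finset.mem_filter.2 ⟨Finset.mem_univ _, by omega⟩)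
  have hcardU : (P ∪ P').card = 2 * P.card := by
    rw [Finset.card_union_of_disjoint hdisj, hcardP']; ring
  have hcardC : (P ∪ P')ᶜ.card = N - 2 * P.card := by
    rw [Finset.card_compl, hcardU, ZMod.card]
  have hle : 2 * P.card ≤ N := by
    have := Finset.card_le_univ (P ∪ P')
    rwa [hcardU, ZMod.card] at this
  have hsplit : ∑ j ∈ (P ∪ P'), d j + ∑ j ∈ (P ∪ P')ᶜ, d j = ∑ j, d j :=
    Finset.sum_add_sum_compl _ _
  rw [hcardC] at h2
  calc N * K = 2 * P.card * K + (N - 2*P.card) * K := by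
        rw [← add_mul, Nat.add_sub_cancel' hle]
    _ ≤ _ := by rw [← hsplit]; exact Nat.add_le_add h1 h2

/-- base point of column `j` (as integer formula cast to `ZMod (3k₁+2)`). -/
def Bf (k₁ t j : ℕ) : ZMod (3*k₁+2) := (((min j t : ℕ) : ℤ) - (2*(k₁:ℤ)+2)*(j:ℤ) : ℤ)

def Wfin (k₁ k₂ t : ℕ) : Finset (ZMod (3*k₁+2) × ZMod (3*k₂+1)) :=
  (Finset.range (3*k₂+1)).biUnion (fun j =>
    (Finset.range (k₁+1)).image (fun i : ℕ => (3*(Bf k₁ t j + (i:ZMod (3*k₁+2))), (j : ZMod (3*k₂+1)))))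

lemma mem_Wfin {k₁ k₂ t : ℕ} {j i : ℕ} (hj : j < 3*k₂+1) (hi : i ≤ k₁) :
    (3*(Bf k₁ t j + i), (j : ZMod (3*k₂+1))) ∈ Wfin k₁ k₂ t := by
  apply Finset.mem_biUnion.2
  exact ⟨j, Finset.mem_range.2 hj, Finset.mem_image.2 ⟨i, Finset.mem_range.2 (by omega), rfl⟩⟩

lemma card_Wfin (k₁ k₂ t : ℕ) : (Wfin k₁ k₂ t).card = (3*k₂+1) * (k₁+1) := by
  rw [Wfin, Finset.card_biUnion]
  · have hcol : ∀ j ∈ Finset.range (3*k₂+1),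
        ((Finset.range (k₁+1)).image
          (fun i : ℕ => ((3*(Bf k₁ t j + (i:ZMod (3*k₁+2))), (j : ZMod (3*k₂+1))) : ZMod (3*k₁+2) × ZMod (3*k₂+1)))).card
        = k₁+1 := by
      intro j _
      rw [Finset.card_image_of_injOn, Finset.card_range]
      intro a ha b hb hab
      simp only [Finset.coe_range, Set.mem_Iio] at ha hb
      have h1 : 3*(Bf k₁ t j + (a:ZMod (3*k₁+2))) = 3*(Bf k₁ t j + b) := congrArg Prod.fst hab
      have h2 : ((3*a : ℕ) : ZMod (3*k₁+2)) = ((3*b : ℕ) : ZMod (3*k₁+2)) := by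
        push_cast
        linear_combination h1
      have := natcast_inj (by omega) (by omega) h2
      omega
    rw [Finset.sum_congr rfl hcol, Finset.sum_const, Finset.card_range, smul_eq_mul]
  · intro a ha b hb hab
    simp only [Finset.mem_coe, Finset.mem_range] at ha hb
    apply Finset.disjoint_left.2
    intro x hxa hxb
    obtain ⟨i, _, hia⟩ := Finset.mem_image.1 hxa
    obtain ⟨i', _, hib⟩ := Finset.mem_image.1 hxb
    have : ((a:ℕ) : ZMod (3*k₂+1)) = (b : ZMod (3*k₂+1)) := by
      have e1 := congrArg Prod.snd hia
      have e2 := congrArg Prod.snd hib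
      simp only at e1 e2
      rw [e1, ← e2]
    exact hab (natcast_inj ha hb this)

lemma dom_Wfin (k₁ k₂ t : ℕ) (ht : k₁ + t = 2*k₂) :
    IsDomSet (prodArc (cycArc (3*k₁+2)) (cycArc (3*k₂+1))) ↑(Wfin k₁ k₂ t) := by
  haveI : NeZero (3*k₁+2) := ⟨by omega⟩
  haveI : NeZero (3*k₂+1) := ⟨by omega⟩
  have htz : (t:ℤ) = 2*(k₂:ℤ) - k₁ := by push_cast; omega
  have ht3 : t ≤ 3*k₂ := by omega
  rintro ⟨x, jz⟩
  set j := jz.val with hjdef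
  have hjn : j < 3*k₂+1 := ZMod.val_lt jz
  have hjz : ((j:ℕ) : ZMod (3*k₂+1)) = jz := ZMod.natCast_rightInverse jz
  set r := (x - 3 * Bf k₁ t j).val with hrdef
  have hrm : r < 3*k₁+2 := ZMod.val_lt _
  have hx : ((r:ℕ) : ZMod (3*k₁+2)) = x - 3 * Bf k₁ t j := ZMod.natCast_rightInverse _
  have hx' : x = 3 * Bf k₁ t j + (r : ZMod (3*k₁+2)) := by rw [hx]; ring
  set i := r / 3 with hidef
  have h3 : r = 3*i ∨ r = 3*i+1 ∨ r = 3*i+2 := by omega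
  rcases h3 with hA | hB | hC
  · -- covered by (3*(Bf j + i), j) itself
    have hi : i ≤ k₁ := by omega
    refine ⟨(3*(Bf k₁ t j + (i:ZMod (3*k₁+2))), (j : ZMod (3*k₂+1))),
      mem_Wfin hjn hi, Or.inl ?_⟩
    rw [hjz]
    have : (3*(Bf k₁ t j + (i:ZMod (3*k₁+2)))) = x := by
      rw [hx', hA]; push_cast; ring
    rw [this]
  · -- covered by vertical arc
    have hi : i ≤ k₁ := by omega
    refine ⟨(3*(Bf k₁ t j + (i:ZMod (3*k₁+2))), (j : ZMod (3*k₂+1))),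
      mem_Wfin hjn hi, Or.inr (Or.inl ⟨?_, by rw [hjz]⟩)⟩
    show x = 3*(Bf k₁ t j + (i:ZMod (3*k₁+2))) + 1
    rw [hx', hB]; push_cast; ring
  · -- covered by horizontal arc from previous column
    have hik : i + 1 ≤ k₁ := by omega
    by_cases hj0 : j = 0
    · -- previous column is 3k₂
      refine ⟨(3*(Bf k₁ t (3*k₂) + (i:ZMod (3*k₁+2))), ((3*k₂ : ℕ) : ZMod (3*k₂+1))),
        mem_Wfin (by omega) (by omega), Or.inr (Or.inr ⟨?_, ?_⟩)⟩
      · show jz = ((3*k₂ : ℕ) : ZMod (3*k₂+1)) + 1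
        rw [← hjz, hj0]
        have hh : ((3*k₂+1 : ℕ) : ZMod (3*k₂+1)) = ((0:ℕ) : ZMod (3*k₂+1)) := by
          rw [ZMod.natCast_self, Nat.cast_zero]
        push_cast at hh
        push_cast
        linear_combination - hh
      · show 3*(Bf k₁ t (3*k₂) + (i:ZMod (3*k₁+2))) = x
        have hmin1 : min (3*k₂) t = t := Nat.min_eq_right ht3
        have hmin2 : min j t = 0 := by omega
        have key : ((3*((t:ℤ) - (2*(k₁:ℤ)+2)*(3*k₂) + i) : ℤ) : ZMod (3*k₁+2))
            = ((3*((0:ℤ) - (2*(k₁:ℤ)+2)*(0:ℤ)) + (3*i+2) : ℤ) : ZMod (3*k₁+2)) := by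
          apply zmod_int_eq
          refine ⟨-(6*(k₂:ℤ)+1), ?_⟩
          push_cast
          linear_combination 3 * htz
        rw [hx', hC, Bf, Bf, hmin1, hmin2, hj0]
        push_cast at key ⊢
        linear_combination key
    · -- previous column is j - 1
      have hj1 : 1 ≤ j := by omega
      by_cases hjt : j ≤ t
      · -- short step: shift i+1
        refine ⟨(3*(Bf k₁ t (j-1) + ((i+1 : ℕ):ZMod (3*k₁+2))), ((j-1 : ℕ) : ZMod (3*k₂+1))),
          mem_Wfin (by omega) hik, Or.inr (Or.inr ⟨?_, ?_⟩)⟩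
        · show jz = ((j-1 : ℕ) : ZMod (3*k₂+1)) + 1
          rw [← hjz]
          have hh : ((j - 1 + 1 : ℕ) : ZMod (3*k₂+1)) = ((j : ℕ) : ZMod (3*k₂+1)) := by
            rw [Nat.sub_add_cancel hj1]
          rw [Nat.cast_add, Nat.cast_one] at hh
          exact hh.symm
        · show 3*(Bf k₁ t (j-1) + ((i+1 : ℕ):ZMod (3*k₁+2))) = x
          have hmin1 : min (j-1) t = j-1 := Nat.min_eq_left (by omega)
          have hmin2 : min j t = j := Nat.min_eq_left hjt
          have hj1z : ((j-1 : ℕ) : ℤ) = (j:ℤ) - 1 := by push_cast [Nat.cast_sub hj1]; ring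
          have key : ((3*(((j:ℤ)-1) - (2*(k₁:ℤ)+2)*((j:ℤ)-1) + (i+1)) : ℤ) : ZMod (3*k₁+2))
              = ((3*((j:ℤ) - (2*(k₁:ℤ)+2)*(j:ℤ)) + (3*i+2) : ℤ) : ZMod (3*k₁+2)) := by
            apply zmod_int_eq
            exact ⟨2, by push_cast; ring⟩
          rw [hx', hC, Bf, Bf, hmin1, hmin2]
          rw [hj1z]
          push_cast at key ⊢
          linear_combination key
      · -- long step: same i
        refine ⟨(3*(Bf k₁ t (j-1) + ((i : ℕ):ZMod (3*k₁+2))), ((j-1 : ℕ) : ZMod (3*k₂+1))),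
          mem_Wfin (by omega) (by omega), Or.inr (Or.inr ⟨?_, ?_⟩)⟩
        · show jz = ((j-1 : ℕ) : ZMod (3*k₂+1)) + 1
          rw [← hjz]
          have hh : ((j - 1 + 1 : ℕ) : ZMod (3*k₂+1)) = ((j : ℕ) : ZMod (3*k₂+1)) := by
            rw [Nat.sub_add_cancel hj1]
          rw [Nat.cast_add, Nat.cast_one] at hh
          exact hh.symm
        · show 3*(Bf k₁ t (j-1) + ((i : ℕ):ZMod (3*k₁+2))) = x
          have hmin1 : min (j-1) t = t := Nat.min_eq_right (by omega)
          have hmin2 : min j t = t := Nat.min_eq_right (by omega)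
          have hj1z : ((j-1 : ℕ) : ℤ) = (j:ℤ) - 1 := by push_cast [Nat.cast_sub hj1]; ring
          have key : ((3*((t:ℤ) - (2*(k₁:ℤ)+2)*((j:ℤ)-1) + i) : ℤ) : ZMod (3*k₁+2))
              = ((3*((t:ℤ) - (2*(k₁:ℤ)+2)*(j:ℤ)) + (3*i+2) : ℤ) : ZMod (3*k₁+2)) := by
            apply zmod_int_eq
            exact ⟨2, by push_cast; ring⟩
          rw [hx', hC, Bf, Bf, hmin1, hmin2]
          rw [hj1z]
          push_cast at key ⊢
          linear_combination key

theorem stmt_9 (m n k₁ k₂ : ℕ) (hm : 2 ≤ m) (hn : 2 ≤ n)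
    (hmmod : m % 3 = 2) (hk₁ : k₁ = m / 3) (hn' : n = 3 * k₂ + 1)
    (hk : k₁ ≤ 2 * k₂) :
    domNum (ZMod m × ZMod n) (prodArc (cycArc m) (cycArc n)) = n * (k₁ + 1) := by
  classical
  have hm2 : m = 3 * k₁ + 2 := by omega
  subst hm2 hn'
  haveI : NeZero (3*k₁+2) := ⟨by omega⟩
  haveI : NeZero (3*k₂+1) := ⟨by omega⟩
  set S : Set ℕ := {k | ∃ W : Set (ZMod (3*k₁+2) × ZMod (3*k₂+1)),
    IsDomSet (prodArc (cycArc (3*k₁+2)) (cycArc (3*k₂+1))) W ∧ W.ncard = k} with hS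
  have hmem : (3*k₂+1) * (k₁+1) ∈ S := by
    refine ⟨↑(Wfin k₁ k₂ (2*k₂ - k₁)), dom_Wfin k₁ k₂ (2*k₂ - k₁) (by omega), ?_⟩
    rw [Set.ncard_coe_finset, card_Wfin]
  have hlow : ∀ c ∈ S, (3*k₂+1) * (k₁+1) ≤ c := by
    rintro c ⟨W, hdom, hcard⟩
    have hfin : W.Finite := W.toFinite
    set F := hfin.toFinset with hF
    have hcardF : W.ncard = F.card := Set.ncard_eq_toFinset_card W hfin
    set d : ZMod (3*k₂+1) → ℕ := fun jz => (F.filter (fun u => u.2 = jz)).card with hd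
    have hcol : ∀ jz, 3*k₁+2 ≤ 2 * d jz + d (jz - 1) := by
      intro jz
      have hsub : (Finset.univ : Finset (ZMod (3*k₁+2))) ⊆
          ((F.filter (fun u => u.2 = jz)).image Prod.fst ∪
            (F.filter (fun u => u.2 = jz)).image (fun u => u.1 + 1)) ∪
          (F.filter (fun u => u.2 = jz - 1)).image Prod.fst := by
        intro x _
        obtain ⟨u, huW, hu⟩ := hdom (x, jz)
        have huF : u ∈ F := hfin.mem_toFinset.2 huW
        rcases hu with rfl | hArc
        · exact Finset.mem_union_left _ (Finset.mem_union_left _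
            (Finset.mem_image.2 ⟨(x, jz), Finset.mem_filter.2 ⟨huF, rfl⟩, rfl⟩))
        · rcases hArc with ⟨hA, h2⟩ | ⟨hB, h1⟩
          · refine Finset.mem_union_left _ (Finset.mem_union_right _
              (Finset.mem_image.2 ⟨u, Finset.mem_filter.2 ⟨huF, h2⟩, ?_⟩))
            exact hA.symm
          · refine Finset.mem_union_right _
              (Finset.mem_image.2 ⟨u, Finset.mem_filter.2 ⟨huF, ?_⟩, h1⟩)
            rw [eq_sub_iff_add_eq]
            exact hB.symm
      have h1 : (3*k₁+2 : ℕ) = (Finset.univ : Finset (ZMod (3*k₁+2))).card := by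
        rw [Finset.card_univ, ZMod.card]
      calc (3*k₁+2 : ℕ) = (Finset.univ : Finset (ZMod (3*k₁+2))).card := h1
        _ ≤ _ := Finset.card_le_card hsub
        _ ≤ ((F.filter (fun u => u.2 = jz)).image Prod.fst ∪
            (F.filter (fun u => u.2 = jz)).image (fun u => u.1 + 1)).card +
            ((F.filter (fun u => u.2 = jz - 1)).image Prod.fst).card := Finset.card_union_le _ _
        _ ≤ (((F.filter (fun u => u.2 = jz)).image Prod.fst).card +
            ((F.filter (fun u => u.2 = jz)).image (fun u => u.1 + 1)).card) +
            ((F.filter (fun u => u.2 = jz - 1)).image Prod.fst).card := by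
              exact Nat.add_le_add_right (Finset.card_union_le _ _) _
        _ ≤ 2 * d jz + d (jz - 1) := by
              have i1 := Finset.card_image_le (s := F.filter (fun u => u.2 = jz)) (f := Prod.fst)
              have i2 := Finset.card_image_le (s := F.filter (fun u => u.2 = jz))
                (f := fun u : ZMod (3*k₁+2) × ZMod (3*k₂+1) => u.1 + 1)
              have i3 := Finset.card_image_le (s := F.filter (fun u => u.2 = jz - 1)) (f := Prod.fst)
              simp only [hd]
              omega
    have hsum : F.card = ∑ jz : ZMod (3*k₂+1), d jz :=
      Finset.card_eq_sum_card_fiberwise (fun x _ => Finset.mem_univ x.2)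
    have := sum_lower (K := k₁+1) d (fun j => by have := hcol j; omega)
    omega
  have h1 : domNum (ZMod (3*k₁+2) × ZMod (3*k₂+1))
      (prodArc (cycArc (3*k₁+2)) (cycArc (3*k₂+1))) = sInf S := rfl
  rw [h1]
  exact le_antisymm (Nat.sInf_le hmem) (hlow _ (Nat.sInf_mem ⟨_, hmem⟩))
end

section
/- Let m, n ≥ 2 with m ≡ 2 (mod 3), k_1 = ⌊m/3⌋, n = 3k_2 + 1, and 2k_2 < k_1. Then γ(C_m □ C_n) > n(k_1 + 1). -/
lemma core_contra (m n : ℕ) [NeZero m] (hm : 2 * n + 3 ≤ m) (f : ZMod m → ℤ)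
    (hmod : ∀ x, f x % 3 = 2)
    (hstep : ∀ x, 0 ≤ 2 * f x + f (x - 1))
    (hsum : ∑ x, f x ≤ (n : ℤ)) : False := by
  classical
  set N := Finset.univ.filter (fun x : ZMod m => f x ≤ -1) with hN
  set P := Finset.univ.filter (fun x : ZMod m => 2 ≤ f x) with hP
  have hPc : P = Finset.univ \ N := by
    ext x
    simp only [hP, hN, Finset.mem_filter, Finset.mem_sdiff, Finset.mem_univ, true_and]
    have := hmod x
    omega
  have hstep1 : ∀ x, f x ≤ -1 → 2 ≤ f (x - 1) := fun x hx => by have := hstep x; omega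
  set N' := N.image (fun x : ZMod m => x - 1) with hN'
  have hinj : Function.Injective (fun x : ZMod m => x - 1) := sub_left_injective
  have hcardN' : N'.card = N.card := Finset.card_image_of_injective _ hinj
  have hN'P : N' ⊆ P := by
    intro z hz
    simp only [hN', Finset.mem_image] at hz
    obtain ⟨y, hy, rfl⟩ := hz
    simp only [hN, Finset.mem_filter] at hy
    exact Finset.mem_filter.2 ⟨Finset.mem_univ _, hstep1 y hy.2⟩
  have hsum1 : ∑ x ∈ Finset.univ \ N, f x + ∑ x ∈ N, f x = ∑ x : ZMod m, f x :=
    Finset.sum_sdiff (Finset.subset_univ N)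
  have hsum2 : ∑ x ∈ P \ N', f x + ∑ x ∈ N', f x = ∑ x ∈ P, f x :=
    Finset.sum_sdiff hN'P
  have hsumN' : ∑ x ∈ N', f x = ∑ y ∈ N, f (y - 1) :=
    Finset.sum_image (fun a _ b _ h => hinj h)
  have hpair : (N.card : ℤ) ≤ ∑ y ∈ N, f y + ∑ y ∈ N, f (y - 1) := by
    rw [← Finset.sum_add_distrib]
    calc (N.card : ℤ) = ∑ _y ∈ N, (1 : ℤ) := by simp
    _ ≤ ∑ y ∈ N, (f y + f (y - 1)) := Finset.sum_le_sum (fun y hy => by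
        have h1 : f y ≤ -1 := (Finset.mem_filter.1 hy).2
        have := hstep y
        omega)
  have hR : ((P \ N').card : ℤ) ≤ ∑ x ∈ P \ N', f x := by
    calc ((P \ N').card : ℤ) = ∑ _x ∈ P \ N', (1 : ℤ) := by simp
    _ ≤ _ := Finset.sum_le_sum (fun x hx => by
        have := (Finset.mem_filter.1 (Finset.mem_sdiff.1 hx).1).2
        omega)
  have hcardP : N.card ≤ P.card := hcardN' ▸ Finset.card_le_card hN'P
  have hNcard_le : N.card ≤ m := by
    calc N.card ≤ (Finset.univ : Finset (ZMod m)).card := Finset.card_le_card (Finset.subset_univ N)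
    _ = m := by rw [Finset.card_univ, ZMod.card]
  have hcards : P.card + N.card = m := by
    rw [hPc, Finset.card_sdiff_of_subset (Finset.subset_univ N), Finset.card_univ, ZMod.card]
    omega
  have hcardsd : (P \ N').card = P.card - N.card := by
    rw [Finset.card_sdiff_of_subset hN'P, hcardN']
  have htot : (P.card : ℤ) ≤ ∑ x : ZMod m, f x := by
    rw [← hsum1, ← hPc, ← hsum2, hsumN']
    calc (P.card : ℤ) = ((P \ N').card : ℤ) + (N.card : ℤ) := by
          rw [hcardsd]; push_cast [Nat.cast_sub hcardP]; ring
    _ ≤ _ := by linarith [hpair, hR]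
  omega

lemma row_bound (m n : ℕ) [NeZero m] [NeZero n] (hm2 : 2 ≤ m)
    (W : Set (ZMod m × ZMod n)) (hW : IsDomSet (prodArc (cycArc m) (cycArc n)) W)
    (F : Finset (ZMod m × ZMod n)) (hF : ∀ p, p ∈ F ↔ p ∈ W) (x : ZMod m) :
    n ≤ 2 * (F.filter (fun p => p.1 = x)).card + (F.filter (fun p => p.1 = x - 1)).card := by
  classical
  haveI : Fact (1 < m) := ⟨hm2⟩
  have hxne : x - 1 ≠ x := by
    intro h
    have : (1 : ZMod m) = 0 := by
      have := sub_eq_self.mp h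
      simp at this
    exact one_ne_zero this
  choose u huW hu using fun y : ZMod n => hW (x, y)
  have hu' : ∀ y : ZMod n, u y = (x, y) ∨
      (x = (u y).1 + 1 ∧ (u y).2 = y) ∨ (y = (u y).2 + 1 ∧ (u y).1 = x) := by
    intro y
    have := hu y
    simpa [prodArc, cycArc] using this
  have hu1 : ∀ y, (u y).1 = x ∨ (u y).1 = x - 1 := by
    intro y
    rcases hu' y with h | h | h
    · left; rw [h]
    · right; exact eq_sub_of_add_eq h.1.symm
    · left; exact h.2
  have hu2 : ∀ y, y = (u y).2 ∨ y = (u y).2 + 1 := by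
    intro y
    rcases hu' y with h | h | h
    · left; rw [h]
    · left; exact h.2.symm
    · right; exact h.1
  have hu2' : ∀ y, (u y).1 = x - 1 → y = (u y).2 := by
    intro y h1
    rcases hu' y with h | h | h
    · exfalso; apply hxne; rw [← h1, h]
    · exact h.2.symm
    · exfalso; apply hxne; rw [← h1, h.2]
  set F₁ := F.filter (fun p => p.1 = x) with hF₁
  set F₂ := F.filter (fun p => p.1 = x - 1) with hF₂
  have hmaps : ∀ y : ZMod n, y ∈ (Finset.univ : Finset (ZMod n)) → u y ∈ F₁ ∪ F₂ := by
    intro y _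
    rcases hu1 y with h | h
    · exact Finset.mem_union_left _ (Finset.mem_filter.2 ⟨(hF _).2 (huW y), h⟩)
    · exact Finset.mem_union_right _ (Finset.mem_filter.2 ⟨(hF _).2 (huW y), h⟩)
  have hcount := Finset.card_eq_sum_card_fiberwise hmaps
  have hfib1 : ∀ v : ZMod m × ZMod n,
      (Finset.univ.filter (fun y => u y = v)).card ≤ 2 := by
    intro v
    have hsub : Finset.univ.filter (fun y => u y = v) ⊆ {v.2, v.2 + 1} := by
      intro y hy
      have hyv : u y = v := (Finset.mem_filter.1 hy).2
      rcases hu2 y with h | h <;> rw [hyv] at h <;> simp [h]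
    calc _ ≤ ({v.2, v.2 + 1} : Finset (ZMod n)).card := Finset.card_le_card hsub
    _ ≤ 2 := Finset.card_le_two
  have hfib2 : ∀ v ∈ F₂, (Finset.univ.filter (fun y => u y = v)).card ≤ 1 := by
    intro v hv
    have hv1 : v.1 = x - 1 := (Finset.mem_filter.1 hv).2
    have hsub : Finset.univ.filter (fun y => u y = v) ⊆ {v.2} := by
      intro y hy
      have hyv : u y = v := (Finset.mem_filter.1 hy).2
      have h2 := hu2' y (by rw [hyv]; exact hv1)
      rw [hyv] at h2
      simp [h2]
    calc _ ≤ ({v.2} : Finset (ZMod n)).card := Finset.card_le_card hsub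
    _ = 1 := Finset.card_singleton _
  calc n = (Finset.univ : Finset (ZMod n)).card := by rw [Finset.card_univ, ZMod.card]
  _ = ∑ v ∈ F₁ ∪ F₂, (Finset.univ.filter (fun y => u y = v)).card := hcount
  _ = ∑ v ∈ F₁, (Finset.univ.filter (fun y => u y = v)).card
      + ∑ v ∈ F₂, (Finset.univ.filter (fun y => u y = v)).card := by
      refine Finset.sum_union (Finset.disjoint_left.2 ?_)
      intro p hp1 hp2
      exact hxne (((Finset.mem_filter.1 hp2).2).symm ▸ (Finset.mem_filter.1 hp1).2 ▸ rfl)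
  _ ≤ ∑ _v ∈ F₁, 2 + ∑ v ∈ F₂, 1 :=
      add_le_add (Finset.sum_le_sum fun v _ => hfib1 v) (Finset.sum_le_sum hfib2)
  _ = 2 * F₁.card + F₂.card := by simp [mul_comm]

theorem stmt_10 (m n k₁ k₂ : ℕ) (hm : 2 ≤ m) (hn : 2 ≤ n)
    (hmmod : m % 3 = 2) (hk₁ : k₁ = m / 3) (hn' : n = 3 * k₂ + 1)
    (hk : 2 * k₂ < k₁) :
    n * (k₁ + 1) < domNum (ZMod m × ZMod n) (prodArc (cycArc m) (cycArc n)) := by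
  haveI : NeZero m := ⟨by omega⟩
  haveI : NeZero n := ⟨by omega⟩
  classical
  have hm' : m = 3 * k₁ + 2 := by omega
  have key : ∀ W : Set (ZMod m × ZMod n),
      IsDomSet (prodArc (cycArc m) (cycArc n)) W → n * (k₁ + 1) < W.ncard := by
    intro W hW
    by_contra hle
    push_neg at hle
    set F := (Set.toFinite W).toFinset with hFdef
    have hF : ∀ p, p ∈ F ↔ p ∈ W := fun p => Set.Finite.mem_toFinset _
    have hcardF : F.card = W.ncard := (Set.ncard_eq_toFinset_card W (Set.toFinite W)).symm
    set r : ZMod m → ℕ := fun x => (F.filter (fun p => p.1 = x)).card with hr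
    have hrsum : ∑ x, r x = F.card :=
      (Finset.card_eq_sum_card_fiberwise (fun p _ => Finset.mem_univ p.1)).symm
    have hrow : ∀ x : ZMod m, n ≤ 2 * r x + r (x - 1) :=
      fun x => row_bound m n hm W hW F hF x
    have hmodf : ∀ x : ZMod m, (3 * (r x : ℤ) - (n : ℤ)) % 3 = 2 := fun x => by omega
    have hstepf : ∀ x : ZMod m,
        0 ≤ 2 * (3 * (r x : ℤ) - (n : ℤ)) + (3 * (r (x - 1) : ℤ) - (n : ℤ)) := fun x => by
      have := hrow x; omega
    have h1 : ∑ x : ZMod m, (3 * (r x : ℤ) - n) = 3 * (F.card : ℤ) - m * n := by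
      rw [Finset.sum_sub_distrib, ← Finset.mul_sum, Finset.sum_const, Finset.card_univ,
        ZMod.card, nsmul_eq_mul]
      have h2 : ∑ x : ZMod m, (r x : ℤ) = (F.card : ℤ) := by
        rw [← Nat.cast_sum, hrsum]
      rw [h2]
    have h3 : (F.card : ℤ) ≤ (n : ℤ) * (k₁ + 1) := by
      have : F.card ≤ n * (k₁ + 1) := by rw [hcardF]; exact hle
      exact_mod_cast this
    have h4 : 3 * ((n : ℤ) * (k₁ + 1)) = (m : ℤ) * n + n := by
      have : (m : ℤ) = 3 * k₁ + 2 := by exact_mod_cast congrArg (Nat.cast : ℕ → ℤ) hm'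
      rw [this]; ring
    have hsumf : ∑ x : ZMod m, (3 * (r x : ℤ) - n) ≤ (n : ℤ) := by
      rw [h1]; linarith
    exact core_contra m n (by omega) (fun x => 3 * (r x : ℤ) - n) hmodf hstepf hsumf
  have hne : ∃ k, k ∈ {k | ∃ W : Set (ZMod m × ZMod n),
      IsDomSet (prodArc (cycArc m) (cycArc n)) W ∧ W.ncard = k} :=
    ⟨(Set.univ : Set (ZMod m × ZMod n)).ncard, Set.univ,
      fun v => ⟨v, trivial, Or.inl rfl⟩, rfl⟩
  obtain ⟨W, hW, hcard⟩ := Nat.sInf_mem hne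
  rw [domNum, ← hcard]
  exact key W hW
end

section
/- Let m, n ≥ 2 with m ≡ 2 (mod 3) and n ≡ 2 (mod 3), k_1 = ⌊m/3⌋, and n ≥ m. Then γ(C_m □ C_n) = n(k_1 + 1). -/
lemma sum_lb_s11 {n K : ℕ} [NeZero n] (g : ZMod n → ℕ)
    (H : ∀ j, g j < K → K + (K - g j) ≤ g (j - 1)) :
    n * K ≤ ∑ j : ZMod n, g j := by
  classical
  set D : Finset (ZMod n) := Finset.univ.filter (fun j => g j < K) with hD
  set E : Finset (ZMod n) := D.image (fun j => j - 1) with hE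
  have hinj : Set.InjOn (fun j : ZMod n => j - 1) D := fun a _ b _ h => by
    simpa using sub_left_inj.mp h
  have hEcard : E.card = D.card := Finset.card_image_of_injOn hinj
  have himg : E ⊆ Finset.univ \ D := by
    intro x hx
    simp only [hE, Finset.mem_image] at hx
    obtain ⟨j, hj, rfl⟩ := hx
    have hjD : g j < K := by simpa [hD] using hj
    have := H j hjD
    simp only [Finset.mem_sdiff, Finset.mem_univ, true_and, hD, Finset.mem_filter]
    omega
  have h1 : ∑ j ∈ Finset.univ \ D, g j + ∑ j ∈ D, g j = ∑ j : ZMod n, g j :=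
    Finset.sum_sdiff (Finset.subset_univ D)
  have h2 : ∑ j ∈ (Finset.univ \ D) \ E, g j + ∑ j ∈ E, g j = ∑ j ∈ Finset.univ \ D, g j :=
    Finset.sum_sdiff himg
  have h3 : ∑ j ∈ E, g j = ∑ j ∈ D, g (j - 1) := Finset.sum_image hinj
  have h4 : ∑ j ∈ D, g j + ∑ j ∈ D, g (j - 1) ≥ D.card * (2 * K) := by
    rw [← Finset.sum_add_distrib]
    calc D.card * (2*K) = ∑ _j ∈ D, 2*K := by rw [Finset.sum_const, smul_eq_mul]
    _ ≤ ∑ j ∈ D, (g j + g (j-1)) := by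
      apply Finset.sum_le_sum
      intro j hj
      have hjD : g j < K := by simpa [hD] using hj
      have := H j hjD
      omega
  have h5 : ∑ j ∈ (Finset.univ \ D) \ E, g j ≥ ((Finset.univ \ D) \ E).card * K := by
    calc ((Finset.univ \ D) \ E).card * K = ∑ _j ∈ (Finset.univ \ D) \ E, K := by
          rw [Finset.sum_const, smul_eq_mul]
    _ ≤ _ := by
      apply Finset.sum_le_sum
      intro j hj
      simp only [Finset.mem_sdiff, Finset.mem_univ, true_and, hD, Finset.mem_filter] at hj
      omega
  have hcards : ((Finset.univ \ D) \ E).card + E.card + D.card = n := by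
    rw [Finset.card_sdiff_of_subset himg, Finset.card_sdiff_of_subset (Finset.subset_univ D)]
    have h6 : D.card ≤ (Finset.univ : Finset (ZMod n)).card := Finset.card_le_univ D
    have h7 : E.card ≤ (Finset.univ : Finset (ZMod n)).card - D.card := by
      calc E.card ≤ (Finset.univ \ D).card := Finset.card_le_card himg
      _ = _ := Finset.card_sdiff_of_subset (Finset.subset_univ D)
    have h8 : (Finset.univ : Finset (ZMod n)).card = n := ZMod.card n
    omega
  have h9 : n = ((Finset.univ \ D) \ E).card + 2 * D.card := by omega
  have h10 : n * K = ((Finset.univ \ D) \ E).card * K + D.card * (2*K) := by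
    conv_lhs => rw [h9]
    ring
  linarith

lemma lower_core {m n : ℕ} (hm : 2 ≤ m) (hn : 2 ≤ n) (hmmod : m % 3 = 2)
    (W : Set (ZMod m × ZMod n)) (hdom : IsDomSet (prodArc (cycArc m) (cycArc n)) W) :
    n * (m / 3 + 1) ≤ W.ncard := by
  classical
  haveI : NeZero m := ⟨by omega⟩
  haveI : NeZero n := ⟨by omega⟩
  have hWfin : W.Finite := Set.toFinite W
  set F : Finset (ZMod m × ZMod n) := hWfin.toFinset with hF
  have hncard : W.ncard = F.card := Set.ncard_eq_toFinset_card W hWfin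
  set A : ZMod n → Finset (ZMod m) :=
    fun j => (F.filter (fun p => p.2 = j)).image Prod.fst with hA
  have hmemA : ∀ (i : ZMod m) (j : ZMod n), i ∈ A j ↔ (i, j) ∈ W := by
    intro i j
    simp only [hA, Finset.mem_image, Finset.mem_filter, hF, Set.Finite.mem_toFinset]
    constructor
    · rintro ⟨⟨a, b⟩, ⟨hab, rfl⟩, rfl⟩; exact hab
    · intro h; exact ⟨(i, j), ⟨h, rfl⟩, rfl⟩
  set g : ZMod n → ℕ := fun j => (A j).card with hg
  have hsum : F.card = ∑ j : ZMod n, g j := by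
    rw [Finset.card_eq_sum_card_fiberwise (f := Prod.snd) (t := Finset.univ)
      (fun x _ => Finset.mem_univ _)]
    apply Finset.sum_congr rfl
    intro j _
    rw [hg]
    apply (Finset.card_image_of_injOn _).symm
    rintro ⟨a, b⟩ hab ⟨c, d⟩ hcd h
    simp only [Finset.mem_coe, Finset.mem_filter] at hab hcd
    simp only at h
    rw [Prod.ext_iff]
    exact ⟨h, hab.2.trans hcd.2.symm⟩
  have hcov : ∀ (i : ZMod m) (j : ZMod n),
      i ∈ A j ∨ i - 1 ∈ A j ∨ i ∈ A (j - 1) := by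
    intro i j
    obtain ⟨⟨u1, u2⟩, huW, hu⟩ := hdom (i, j)
    rcases hu with h | harc
    · rw [Prod.ext_iff] at h
      obtain ⟨h1, h2⟩ := h
      simp only at h1 h2
      subst h1; subst h2
      exact Or.inl ((hmemA _ _).2 huW)
    · rcases harc with ⟨h1, h2⟩ | ⟨h1, h2⟩
      · refine Or.inr (Or.inl ?_)
        simp only [cycArc] at h1 h2
        have e1 : u1 = i - 1 := by rw [h1]; ring
        subst h2
        rw [hmemA, ← e1]
        exact huW
      · refine Or.inr (Or.inr ?_)
        simp only [cycArc] at h1 h2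
        have e1 : u2 = j - 1 := by rw [h1]; ring
        subst h2
        rw [hmemA, ← e1]
        exact huW
  have hkey : ∀ j : ZMod n, m ≤ g (j - 1) + 2 * g j := by
    intro j
    set B : Finset (ZMod m) := A j ∪ (A j).image (· + 1) with hB
    have hBcard : B.card ≤ 2 * g j := by
      calc B.card ≤ (A j).card + ((A j).image (· + 1)).card := Finset.card_union_le _ _
      _ ≤ (A j).card + (A j).card := by
          have := Finset.card_image_le (s := A j) (f := (· + 1))
          omega
      _ = 2 * g j := by rw [hg]; ring
    have hsub : Finset.univ \ B ⊆ A (j - 1) := by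
      intro i hi
      simp only [Finset.mem_sdiff, Finset.mem_univ, true_and, hB, Finset.mem_union,
        Finset.mem_image, not_or, not_exists] at hi
      rcases hcov i j with h | h | h
      · exact absurd h hi.1
      · exact absurd (by simp : i - 1 + 1 = i) (by
          intro hc
          exact hi.2 (i - 1) ⟨h, hc⟩)
      · exact h
    have h1 : (Finset.univ \ B).card ≤ g (j - 1) := Finset.card_le_card hsub
    have h2 : (Finset.univ \ B).card = (Finset.univ : Finset (ZMod m)).card - B.card :=
      Finset.card_sdiff_of_subset (Finset.subset_univ B)
    have h3 : (Finset.univ : Finset (ZMod m)).card = m := ZMod.card m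
    have h4 : B.card ≤ (Finset.univ : Finset (ZMod m)).card := Finset.card_le_univ B
    omega
  have hH : ∀ j : ZMod n, g j < m / 3 + 1 → (m/3+1) + ((m/3+1) - g j) ≤ g (j - 1) := by
    intro j hj
    have := hkey j
    omega
  have := sum_lb_s11 g hH
  omega

lemma upper_core {m n : ℕ} (hm : 2 ≤ m) (hn : 2 ≤ n) (hmmod : m % 3 = 2)
    (hmn : m ≤ n) :
    ∃ W : Set (ZMod m × ZMod n), IsDomSet (prodArc (cycArc m) (cycArc n)) W ∧
      W.ncard = n * (m / 3 + 1) := by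
  classical
  haveI : NeZero m := ⟨by omega⟩
  haveI : NeZero n := ⟨by omega⟩
  set k₁ := m / 3 with hk
  have hm3 : m = 3 * k₁ + 2 := by omega
  have hcop : Nat.Coprime 3 m := by
    rw [Nat.Prime.coprime_iff_not_dvd (by norm_num)]
    omega
  set u : (ZMod m)ˣ := ZMod.unitOfCoprime 3 hcop with hu
  set b : ℕ := (((u⁻¹ : (ZMod m)ˣ) : ZMod m) * (n : ZMod m)).val with hb
  have hblt : b < m := ZMod.val_lt _
  have hbcast : (b : ZMod m) = ((u⁻¹ : (ZMod m)ˣ) : ZMod m) * (n : ZMod m) := by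
    rw [hb, ZMod.natCast_val, ZMod.cast_id]
  have hb3 : (3 : ZMod m) * (b : ZMod m) = (n : ZMod m) := by
    rw [hbcast]
    have h3u : ((u : (ZMod m)ˣ) : ZMod m) = (3 : ZMod m) := by
      rw [hu]
      simpa using ZMod.coe_unitOfCoprime 3 hcop
    rw [← h3u]
    exact Units.mul_inv_cancel_left u _
  have hbn : b ≤ n - 1 := by omega
  set c : ℕ → ZMod m := fun j => (j : ZMod m) - 3 * ((min j b : ℕ) : ZMod m) with hc
  -- the cast of val back
  have hvalcast : ∀ x : ZMod n, ((x.val : ℕ) : ZMod n) = x := fun x => by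
    rw [ZMod.natCast_val, ZMod.cast_id]
  have hvalcastm : ∀ x : ZMod m, ((x.val : ℕ) : ZMod m) = x := fun x => by
    rw [ZMod.natCast_val, ZMod.cast_id]
  -- step lemma
  have hstep : ∀ j : ZMod n, ∃ e : ZMod m, (e = 1 ∨ e = -2) ∧
      c j.val = c ((j - 1).val) + e := by
    intro j
    by_cases hj0 : j.val = 0
    · refine ⟨1, Or.inl rfl, ?_⟩
      have hj : j = 0 := by
        have := hvalcast j
        rw [hj0] at this
        simpa using this.symm
      have hval : ((0 : ZMod n) - 1).val = n - 1 := by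
        have h1 : ((0 : ZMod n) - 1) = ((n - 1 : ℕ) : ZMod n) := by
          push_cast [Nat.cast_sub (by omega : 1 ≤ n)]
          simp [ZMod.natCast_self]
        rw [h1, ZMod.val_cast_of_lt (by omega)]
      rw [hj, hval]
      have hmin1 : min (n - 1) b = b := min_eq_right hbn
      have hv0 : (0 : ZMod n).val = 0 := ZMod.val_zero
      rw [hc]
      simp only [hmin1, hv0, Nat.zero_min, Nat.cast_zero]
      push_cast [Nat.cast_sub (by omega : 1 ≤ n)]
      linear_combination hb3
    · -- j.val ≥ 1
      have hjv : 1 ≤ j.val := by omega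
      have hvlt : j.val < n := ZMod.val_lt j
      have hval : (j - 1).val = j.val - 1 := by
        have h1 : j - 1 = ((j.val - 1 : ℕ) : ZMod n) := by
          push_cast [Nat.cast_sub hjv]
          rw [hvalcast j]
        rw [h1, ZMod.val_cast_of_lt (by omega)]
      rw [hval]
      by_cases hjb : j.val ≤ b
      · refine ⟨-2, Or.inr rfl, ?_⟩
        have h1 : min j.val b = j.val := min_eq_left hjb
        have h2 : min (j.val - 1) b = j.val - 1 := min_eq_left (by omega)
        rw [hc]
        simp only [h1, h2]
        push_cast [Nat.cast_sub hjv]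
        ring
      · refine ⟨1, Or.inl rfl, ?_⟩
        have h1 : min j.val b = b := min_eq_right (by omega)
        have h2 : min (j.val - 1) b = b := min_eq_right (by omega)
        rw [hc]
        simp only [h1, h2]
        push_cast [Nat.cast_sub hjv]
        ring
  -- the dominating set
  set f : ZMod n × Fin (k₁ + 1) → ZMod m × ZMod n :=
    fun p => (c p.1.val + ((3 * (p.2 : ℕ) : ℕ) : ZMod m), p.1) with hf
  have hfinj : Function.Injective f := by
    rintro ⟨j₁, t₁⟩ ⟨j₂, t₂⟩ h
    rw [hf, Prod.ext_iff] at h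
    simp only at h
    obtain ⟨h1, h2⟩ := h
    subst h2
    have h3 : ((3 * (t₁ : ℕ) : ℕ) : ZMod m) = ((3 * (t₂ : ℕ) : ℕ) : ZMod m) := by
      have := h1
      exact add_left_cancel this
    have ht₁ : 3 * (t₁ : ℕ) < m := by have := t₁.isLt; omega
    have ht₂ : 3 * (t₂ : ℕ) < m := by have := t₂.isLt; omega
    have := congrArg ZMod.val h3
    rw [ZMod.val_cast_of_lt ht₁, ZMod.val_cast_of_lt ht₂] at this
    have : (t₁ : ℕ) = (t₂ : ℕ) := by omega
    simp [Prod.ext_iff, Fin.ext_iff, this]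
  refine ⟨Set.range f, ?_, ?_⟩
  · -- dominating
    rintro ⟨i, j⟩
    set x : ZMod m := i - c j.val with hx
    have hxi : i = c j.val + x := by rw [hx]; ring
    set xv := x.val with hxv
    have hxlt : xv < m := ZMod.val_lt x
    have hxcast : ((xv : ℕ) : ZMod m) = x := hvalcastm x
    have hmem : ∀ (i' : ZMod m) (j' : ZMod n), (∃ t : ℕ, t ≤ k₁ ∧
        i' = c j'.val + ((3 * t : ℕ) : ZMod m)) → (i', j') ∈ Set.range f := by
      rintro i' j' ⟨t, ht, hi'⟩
      refine ⟨(j', ⟨t, by omega⟩), ?_⟩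
      rw [hf]
      simp only
      rw [hi']
    have h3 : xv % 3 = 0 ∨ xv % 3 = 1 ∨ xv % 3 = 2 := by omega
    rcases h3 with h | h | h
    · -- covered by itself
      obtain ⟨q, hqk, hq⟩ : ∃ q, q ≤ k₁ ∧ xv = 3 * q := ⟨xv / 3, by omega, by omega⟩
      refine ⟨(i, j), hmem i j ⟨q, hqk, ?_⟩, Or.inl rfl⟩
      rw [hxi, ← hxcast, hq]
    · -- covered from the left: (i-1, j)
      obtain ⟨q, hqk, hq⟩ : ∃ q, q ≤ k₁ ∧ xv = 3 * q + 1 := ⟨xv / 3, by omega, by omega⟩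
      refine ⟨(i - 1, j), hmem (i - 1) j ⟨q, hqk, ?_⟩, Or.inr (Or.inl ⟨?_, rfl⟩)⟩
      · rw [hxi, ← hxcast, hq]
        push_cast
        ring
      · show i = (i - 1) + 1
        ring
    · -- covered from above: (i, j-1)
      obtain ⟨e, he, hce⟩ := hstep j
      obtain ⟨q, hqk, hq⟩ : ∃ q, q + 1 ≤ k₁ ∧ xv = 3 * q + 2 := ⟨xv / 3, by omega, by omega⟩
      refine ⟨(i, j - 1), hmem i (j - 1) ?_, Or.inr (Or.inr ⟨?_, rfl⟩)⟩
      · rcases he with rfl | rfl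
        · refine ⟨q + 1, by omega, ?_⟩
          rw [hxi, hce, ← hxcast, hq]
          push_cast
          ring
        · refine ⟨q, by omega, ?_⟩
          rw [hxi, hce, ← hxcast, hq]
          push_cast
          ring
      · show j = (j - 1) + 1
        ring
  · -- cardinality
    have h1 : (Set.range f).ncard = (Set.univ : Set (ZMod n × Fin (k₁+1))).ncard := by
      rw [← Set.image_univ]
      exact Set.ncard_image_of_injective _ hfinj
    rw [h1, Set.ncard_univ, Nat.card_prod, Nat.card_eq_fintype_card,
      Nat.card_eq_fintype_card, ZMod.card, Fintype.card_fin]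


theorem stmt_11 (m n k₁ : ℕ) (hm : 2 ≤ m) (hn : 2 ≤ n)
    (hmmod : m % 3 = 2) (hnmod : n % 3 = 2) (hk₁ : k₁ = m / 3) (hmn : m ≤ n) :
    domNum (ZMod m × ZMod n) (prodArc (cycArc m) (cycArc n)) = n * (k₁ + 1) := by
  subst hk₁
  obtain ⟨W, hWdom, hWcard⟩ := upper_core hm hn hmmod hmn
  rw [domNum]
  apply le_antisymm
  · exact Nat.sInf_le ⟨W, hWdom, hWcard⟩
  · refine le_csInf ⟨n * (m / 3 + 1), W, hWdom, hWcard⟩ ?_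
    rintro k ⟨V, hVdom, hVcard⟩
    rw [← hVcard]
    exact lower_core hm hn hmmod V hVdom
end

section
/- Let m, n ≥ 2 with m ≡ 2 (mod 3) and n ≡ 2 (mod 3), k_2 = ⌊n/3⌋, and n ≤ m. Then γ(C_m □ C_n) = m(k_2 + 1). -/
open Finset in
private lemma sum_lower_s12 (m c : ℕ) [NeZero m] (x : ZMod m → ℕ)
    (h : ∀ a, 3*c ≤ 2 * x a + x (a-1) + 1) : m * c ≤ ∑ a, x a := by
  have key : (0:ℤ) ≤ ∑ a : ZMod m, ((x a : ℤ) - c) := by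
    set d : ZMod m → ℤ := fun a => (x a : ℤ) - c with hd
    have hineq : ∀ a, -1 ≤ 2 * d a + d (a-1) := by
      intro a
      have := h a
      simp only [hd]
      push_cast
      omega
    have hded : ∀ a, d a < 0 → 1 ≤ d (a-1) := by
      intro a ha
      have := hineq a
      omega
    set D : Finset (ZMod m) := univ.filter (fun a => d a < 0) with hD
    set D' : Finset (ZMod m) := D.image (fun a => a - 1) with hD'
    have hdisj : Disjoint D D' := by
      rw [Finset.disjoint_right]
      intro b hb hbD
      simp only [hD', Finset.mem_image] at hb
      obtain ⟨a, ha, rfl⟩ := hb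
      have h1 : d a < 0 := by simpa [hD] using ha
      have h2 : d (a-1) < 0 := by simpa [hD] using hbD
      have := hded a h1
      omega
    have hsub : D ∪ D' ⊆ univ := Finset.subset_univ _
    have h1 : ∑ a ∈ D ∪ D', d a ≤ ∑ a : ZMod m, d a := by
      apply Finset.sum_le_sum_of_subset_of_nonneg hsub
      intro a _ ha
      simp only [Finset.mem_union, hD, Finset.mem_filter, Finset.mem_univ, true_and] at ha
      push_neg at ha
      exact ha.1
    have h2 : ∑ a ∈ D ∪ D', d a = ∑ a ∈ D, (d a + d (a-1)) := by
      rw [Finset.sum_union hdisj, Finset.sum_add_distrib]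
      congr 1
      rw [hD', Finset.sum_image]
      intro a _ b _ hab
      exact sub_left_injective hab
    have h3 : 0 ≤ ∑ a ∈ D, (d a + d (a-1)) := by
      apply Finset.sum_nonneg
      intro a ha
      have h1 : d a < 0 := by simpa [hD] using ha
      have := hineq a
      omega
    linarith
  have hcard : (Finset.univ : Finset (ZMod m)).card = m := by
    simp [ZMod.card]
  rw [Finset.sum_sub_distrib] at key
  simp only [Finset.sum_const, hcard, nsmul_eq_mul] at key
  have : (m * c : ℤ) ≤ ∑ a : ZMod m, (x a : ℤ) := by linarith
  have h4 : ((∑ a : ZMod m, x a : ℕ) : ℤ) = ∑ a : ZMod m, (x a : ℤ) := by push_cast; ring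
  rw [← h4] at this
  exact_mod_cast this

open Finset in
private lemma lower_bd (m n : ℕ) (hm : 2 ≤ m) (hn : 2 ≤ n) (hnmod : n % 3 = 2)
    (W : Set (ZMod m × ZMod n)) (hW : IsDomSet (prodArc (cycArc m) (cycArc n)) W) :
    m * (n / 3 + 1) ≤ W.ncard := by
  haveI : NeZero m := ⟨by omega⟩
  haveI : NeZero n := ⟨by omega⟩
  classical
  set S : ZMod m → Finset (ZMod n) := fun a => univ.filter (fun b => (a, b) ∈ W) with hS
  have cover : ∀ a b, b ∈ S a ∨ (b - 1) ∈ S a ∨ b ∈ S (a - 1) := by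
    intro a b
    obtain ⟨⟨u1, u2⟩, huW, hu⟩ := hW (a, b)
    simp only [prodArc, cycArc] at hu
    rcases hu with heq | ⟨hA, h2⟩ | ⟨hB, h1⟩
    · left
      simp only [Prod.mk.injEq] at heq
      obtain ⟨rfl, rfl⟩ := heq
      simpa [hS] using huW
    · right; right
      have h1 : u1 = a - 1 := by rw [hA]; ring
      simp only [hS, mem_filter, mem_univ, true_and]
      rw [← h1, ← h2]; exact huW
    · right; left
      have h2 : u2 = b - 1 := by rw [hB]; ring
      simp only [hS, mem_filter, mem_univ, true_and]
      rw [← h2, ← h1]; exact huW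
  have colineq : ∀ a, 3 * (n / 3 + 1) ≤ 2 * (S a).card + (S (a-1)).card + 1 := by
    intro a
    have hsub : (univ : Finset (ZMod n)) ⊆ S a ∪ (S a).image (· + 1) ∪ S (a - 1) := by
      intro b _
      rcases cover a b with h | h | h
      · exact mem_union_left _ (mem_union_left _ h)
      · refine mem_union_left _ (mem_union_right _ ?_)
        exact mem_image.2 ⟨b - 1, h, by ring⟩
      · exact mem_union_right _ h
    have hcard : n ≤ 2 * (S a).card + (S (a-1)).card := by
      have h1 : (univ : Finset (ZMod n)).card = n := by simp [ZMod.card]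
      calc n = (univ : Finset (ZMod n)).card := h1.symm
        _ ≤ (S a ∪ (S a).image (· + 1) ∪ S (a - 1)).card := card_le_card hsub
        _ ≤ (S a ∪ (S a).image (· + 1)).card + (S (a-1)).card := card_union_le _ _
        _ ≤ ((S a).card + ((S a).image (· + 1)).card) + (S (a-1)).card := by
            exact Nat.add_le_add_right (card_union_le _ _) _
        _ ≤ 2 * (S a).card + (S (a-1)).card := by
            have := card_image_le (s := S a) (f := (· + 1))
            omega
    omega
  have hsum := sum_lower_s12 m (n / 3 + 1) (fun a => (S a).card) colineq
  have hfin : W.Finite := Set.toFinite W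
  have hcnt : ∑ a, (S a).card = W.ncard := by
    rw [Set.ncard_eq_toFinset_card' W]
    rw [Finset.card_eq_sum_card_fiberwise (f := Prod.fst) (t := univ) (fun p _ => mem_univ _)]
    apply Finset.sum_congr rfl
    intro a _
    have : W.toFinset.filter (fun p => p.1 = a) = (S a).image (fun b => (a, b)) := by
      ext p
      simp only [mem_filter, Set.mem_toFinset, mem_image, hS, mem_univ, true_and]
      constructor
      · rintro ⟨hp, rfl⟩; exact ⟨p.2, hp, rfl⟩
      · rintro ⟨b, hb, rfl⟩; exact ⟨hb, rfl⟩
    rw [this, card_image_of_injective _ (fun b b' h => by simpa using h)]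
  rw [hcnt] at hsum
  exact hsum

open Finset in
private lemma upper_bd (m n : ℕ) (hm : 2 ≤ m) (hn : 2 ≤ n)
    (hmmod : m % 3 = 2) (hnmod : n % 3 = 2) (hmn : n ≤ m) :
    ∃ W : Set (ZMod m × ZMod n), IsDomSet (prodArc (cycArc m) (cycArc n)) W ∧
      W.ncard = m * (n / 3 + 1) := by
  haveI : NeZero m := ⟨by omega⟩
  haveI : NeZero n := ⟨by omega⟩
  haveI : Fact (1 < m) := ⟨by omega⟩
  classical
  obtain ⟨k, hn3⟩ : ∃ k, n = 3 * k + 2 := ⟨n / 3, by omega⟩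
  obtain ⟨j, hj3, hjm⟩ : ∃ j, 3 * j = m + 2 * n ∧ j ≤ m :=
    ⟨(m + 2 * n) / 3, by omega, by omega⟩
  set F : ℕ → ℤ := fun a => (a : ℤ) - 3 * min a j with hF
  set f : ZMod m → ZMod n := fun x => ((F x.val : ℤ) : ZMod n) with hf
  have hval1 : (1 : ZMod m).val = 1 := ZMod.val_one m
  have step : ∀ x : ZMod m, f x = f (x + 1) + 2 ∨ f x = f (x + 1) - 1 := by
    intro x
    have hxlt : x.val < m := ZMod.val_lt x
    have hvadd : (x + 1).val = (x.val + 1) % m := by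
      rw [ZMod.val_add, hval1]
    rcases Nat.lt_or_ge (x.val + 1) m with hlt | hge
    · have hv : (x + 1).val = x.val + 1 := by rw [hvadd, Nat.mod_eq_of_lt hlt]
      rcases Nat.lt_or_ge x.val j with h | h
      · left
        have hFe : F x.val = F (x.val + 1) + 2 := by
          simp only [hF]
          rw [min_eq_left (by omega : x.val ≤ j), min_eq_left (by omega : x.val + 1 ≤ j)]
          push_cast; ring
        show ((F x.val : ℤ) : ZMod n) = ((F (x + 1).val : ℤ) : ZMod n) + 2
        rw [hv, hFe]; push_cast; ring
      · right
        have hFe : F x.val = F (x.val + 1) - 1 := by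
          simp only [hF]
          rw [min_eq_right (by omega : j ≤ x.val), min_eq_right (by omega : j ≤ x.val + 1)]
          push_cast; ring
        show ((F x.val : ℤ) : ZMod n) = ((F (x + 1).val : ℤ) : ZMod n) - 1
        rw [hv, hFe]; push_cast; ring
    · have hxm : x.val + 1 = m := by omega
      have hv : (x + 1).val = 0 := by rw [hvadd, hxm, Nat.mod_self]
      have hf1 : f (x + 1) = 0 := by
        show ((F (x + 1).val : ℤ) : ZMod n) = 0
        rw [hv]
        simp [hF]
      rcases Nat.lt_or_ge j m with hjlt | hjge
      · right
        rw [hf1]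
        show ((F x.val : ℤ) : ZMod n) = 0 - 1
        have hxv : x.val = m - 1 := by omega
        have hFe : F x.val = -1 - 2 * n := by
          simp only [hF, hxv]
          rw [min_eq_right (by omega : j ≤ m - 1)]
          have h2 : (((m - 1 : ℕ)) : ℤ) = (m : ℤ) - 1 := by
            push_cast [Nat.cast_sub (by omega : 1 ≤ m)]; ring
          rw [h2]
          have h3 : (3 : ℤ) * j = m + 2 * n := by exact_mod_cast hj3
          omega
        rw [hFe]
        push_cast
        simp [ZMod.natCast_self]
      · left
        have hjem : j = m := le_antisymm hjm hjge
        have hnm : n = m := by omega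
        rw [hf1]
        show ((F x.val : ℤ) : ZMod n) = 0 + 2
        have hxv : x.val = m - 1 := by omega
        have hFe : F x.val = -2 * n + 2 := by
          simp only [hF, hxv]
          rw [min_eq_left (by omega : m - 1 ≤ j)]
          have h2 : (((m - 1 : ℕ)) : ℤ) = (m : ℤ) - 1 := by
            push_cast [Nat.cast_sub (by omega : 1 ≤ m)]; ring
          rw [h2]
          have : (n : ℤ) = m := by exact_mod_cast hnm
          omega
        rw [hFe]
        push_cast
        simp [ZMod.natCast_self]
  set W : Set (ZMod m × ZMod n) :=
    {p | ∃ t : ℕ, t ≤ k ∧ p.2 = f p.1 + ((3 * t : ℕ) : ZMod n)} with hW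
  have hdom : IsDomSet (prodArc (cycArc m) (cycArc n)) W := by
    intro ⟨X, Y⟩
    set r : ℕ := (Y - f X).val with hr
    have hrn : r < n := ZMod.val_lt _
    have hrc : ((r : ℕ) : ZMod n) = Y - f X := ZMod.natCast_rightInverse _
    obtain ⟨t, s, hs, hrts⟩ : ∃ t s, s < 3 ∧ r = 3 * t + s := ⟨r / 3, r % 3, by omega, by omega⟩
    rcases (by omega : s = 0 ∨ s = 1 ∨ s = 2) with rfl | rfl | rfl
    · refine ⟨(X, Y), ⟨t, by omega, ?_⟩, Or.inl rfl⟩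
      show Y = f X + ((3 * t : ℕ) : ZMod n)
      rw [show 3 * t = r by omega, hrc]; ring
    · refine ⟨(X, Y - 1), ⟨t, by omega, ?_⟩, Or.inr (Or.inr ⟨by simp [cycArc], rfl⟩)⟩
      show Y - 1 = f X + ((3 * t : ℕ) : ZMod n)
      have h1 : (r : ZMod n) = ((3 * t : ℕ) : ZMod n) + 1 := by
        rw [show r = 3 * t + 1 by omega]; push_cast; ring
      rw [h1] at hrc
      linear_combination -hrc
    · have htk : t + 1 ≤ k := by omega
      have hXX : (X - 1) + 1 = X := by ring
      rcases step (X - 1) with hstep | hstep <;> rw [hXX] at hstep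
      · refine ⟨(X - 1, Y), ⟨t, by omega, ?_⟩, Or.inr (Or.inl ⟨by simp [cycArc, hXX], rfl⟩)⟩
        show Y = f (X - 1) + ((3 * t : ℕ) : ZMod n)
        rw [hstep]
        have h1 : (r : ZMod n) = ((3 * t : ℕ) : ZMod n) + 2 := by
          rw [show r = 3 * t + 2 by omega]; push_cast; ring
        rw [h1] at hrc
        linear_combination -hrc
      · refine ⟨(X - 1, Y), ⟨t + 1, htk, ?_⟩, Or.inr (Or.inl ⟨by simp [cycArc, hXX], rfl⟩)⟩
        show Y = f (X - 1) + ((3 * (t + 1) : ℕ) : ZMod n)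
        rw [hstep]
        have h1 : (r : ZMod n) = ((3 * (t + 1) : ℕ) : ZMod n) - 1 := by
          rw [show r = 3 * t + 2 by omega]; push_cast; ring
        rw [h1] at hrc
        linear_combination -hrc
  refine ⟨W, hdom, ?_⟩
  have hWf : W = ↑((univ ×ˢ Finset.range (k + 1)).image
      (fun q : ZMod m × ℕ => (q.1, f q.1 + ((3 * q.2 : ℕ) : ZMod n)))) := by
    ext p
    simp only [hW, Set.mem_setOf_eq, Finset.coe_image, Set.mem_image, Finset.mem_coe,
      Finset.mem_product, Finset.mem_univ, true_and, Finset.mem_range]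
    constructor
    · rintro ⟨t, htk, hp⟩
      exact ⟨(p.1, t), by omega, by
        rw [← hp]⟩
    · rintro ⟨⟨a, t⟩, htk, rfl⟩
      exact ⟨t, by omega, rfl⟩
  rw [hWf, Set.ncard_coe_finset]
  rw [Finset.card_image_of_injOn]
  · simp only [Finset.card_product, Finset.card_univ, ZMod.card, Finset.card_range]
    congr 1
    omega
  · rintro ⟨a, t⟩ hat ⟨a', t'⟩ hat' heq
    simp only [Finset.mem_coe, Finset.mem_product, Finset.mem_univ, true_and,
      Finset.mem_range] at hat hat'
    simp only [Prod.mk.injEq] at heq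
    obtain ⟨rfl, h2⟩ := heq
    have h3 : ((3 * t : ℕ) : ZMod n) = ((3 * t' : ℕ) : ZMod n) := by
      linear_combination h2
    have h4 := congrArg ZMod.val h3
    rw [ZMod.val_cast_of_lt (by omega), ZMod.val_cast_of_lt (by omega)] at h4
    have : t = t' := by omega
    rw [this]

theorem stmt_12 (m n k₂ : ℕ) (hm : 2 ≤ m) (hn : 2 ≤ n)
    (hmmod : m % 3 = 2) (hnmod : n % 3 = 2) (hk₂ : k₂ = n / 3) (hmn : n ≤ m) :
    domNum (ZMod m × ZMod n) (prodArc (cycArc m) (cycArc n)) = m * (k₂ + 1) := by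
  subst hk₂
  rw [domNum]
  apply le_antisymm
  · obtain ⟨W, hdom, hcard⟩ := upper_bd m n hm hn hmmod hnmod hmn
    exact Nat.sInf_le ⟨W, hdom, hcard⟩
  · apply le_csInf
    · obtain ⟨W, hdom, hcard⟩ := upper_bd m n hm hn hmmod hnmod hmn
      exact ⟨_, W, hdom, hcard⟩
    · rintro b ⟨W, hdom, rfl⟩
      exact lower_bd m n hm hn hnmod W hdom
end
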